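/- arXiv:1706.04768 — 6 statements merged into one kernel-verified Lean document; each statement's English description precedes it below -/
import Mathlib

section
/- Let F be an m×n real matrix and set r = min{m,n}. Then det(I_n + FᵀF) = 1 + Σ_{k=1}^{r} Σ_{A ⊆ {1,…,m}, I ⊆ {1,…,n}, |A| = |I| = k} ([F]_{A,I})². In particular ξ(F) := det(I_n + FᵀF) is a sum of squares of the minors of F plus 1. -/
open Matrix

noncomputable def mminor {m n : ℕ} (F : Matrix (Fin m) (Fin n) ℝ)
    (A : Finset (Fin m)) (I : Finset (Fin n)) : ℝ :=
  if h : A.card = I.card then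
    Matrix.det (Matrix.of fun p q : Fin I.card =>
      F (A.orderEmbOfFin h p) (I.orderEmbOfFin rfl q))
  else 0

section Aux
open Finset Equiv

noncomputable def Phi {k m : ℕ} (M : Matrix (Fin k) (Fin m) ℝ) (N : Matrix (Fin m) (Fin k) ℝ)
    (p : Fin k → Fin m) : ℝ :=
  ∑ σ : Equiv.Perm (Fin k), (Equiv.Perm.sign σ : ℝ) * ∏ i, M (σ i) (p i) * N (p i) i

lemma det_mul_expand {k m : ℕ} (M : Matrix (Fin k) (Fin m) ℝ) (N : Matrix (Fin m) (Fin k) ℝ) :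
    det (M * N) = ∑ p : Fin k → Fin m, Phi M N p := by
  unfold Phi
  simp only [det_apply', mul_apply, prod_univ_sum, mul_sum, Fintype.piFinset_univ]
  rw [Finset.sum_comm]

lemma Phi_eq_zero {k m : ℕ} (M : Matrix (Fin k) (Fin m) ℝ) (N : Matrix (Fin m) (Fin k) ℝ)
    {p : Fin k → Fin m} (H : ¬Function.Injective p) : Phi M N p = 0 := by
  obtain ⟨i, j, hpij, hij⟩ : ∃ i j, p i = p j ∧ i ≠ j := by
    rw [Function.Injective] at H
    push_neg at H
    obtain ⟨i, j, h1, h2⟩ := H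
    exact ⟨i, j, h1, h2⟩
  unfold Phi
  exact
    Finset.sum_involution (fun σ _ => σ * Equiv.swap i j)
      (fun σ _ => by
        have : (∏ x, M (σ x) (p x)) = ∏ x, M ((σ * Equiv.swap i j) x) (p x) :=
          Fintype.prod_equiv (Equiv.swap i j) _ _ (by simp [Equiv.apply_swap_eq_self hpij])
        simp [this, Equiv.Perm.sign_swap hij, prod_mul_distrib])
      (fun σ _ _ => (not_congr Equiv.mul_swap_eq_iff).mpr hij) (fun _ _ => Finset.mem_univ _)
      fun σ _ => Equiv.mul_swap_involutive i j σ

lemma det_mul_eq_sum_perm {k : ℕ} (P Q : Matrix (Fin k) (Fin k) ℝ) :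
    det P * det Q = ∑ τ : Equiv.Perm (Fin k), Phi P Q ⇑τ := by
  have h1 : det (P * Q) = ∑ p ∈ Finset.univ.filter
      (fun p : Fin k → Fin k => Function.Injective p), Phi P Q p := by
    rw [det_mul_expand]
    exact (Finset.sum_subset (Finset.filter_subset _ _)
      (fun p _ hp => Phi_eq_zero P Q (by simpa using hp))).symm
  rw [← det_mul P Q, h1]
  refine (Finset.sum_bij (fun (τ : Equiv.Perm (Fin k)) _ => ⇑τ) ?_ ?_ ?_ ?_).symm
  · intro τ _
    simp [τ.injective]
  · intro τ _ ρ _ h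
    exact Equiv.coe_fn_injective h
  · intro p hp
    have hpinj : Function.Injective p := by simpa using hp
    exact ⟨Equiv.ofBijective p (Finite.injective_iff_bijective.mp hpinj), Finset.mem_univ _, rfl⟩
  · intros; rfl

lemma range_comp_perm {k m : ℕ} (A : Finset (Fin m)) (h : A.card = k) (τ : Equiv.Perm (Fin k)) :
    Set.range (fun i => A.orderEmbOfFin h (τ i)) = (A : Set (Fin m)) := by
  have : (fun i => A.orderEmbOfFin h (τ i)) = (A.orderEmbOfFin h) ∘ τ := rfl
  rw [this, Set.range_comp, Equiv.range_eq_univ, Set.image_univ, Finset.range_orderEmbOfFin]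

lemma sum_injective_eq {k m : ℕ} (Φ : (Fin k → Fin m) → ℝ) :
    ∑ p ∈ Finset.univ.filter (fun p : Fin k → Fin m => Function.Injective p), Φ p
      = ∑ A ∈ (Finset.powersetCard k (Finset.univ : Finset (Fin m))).attach,
          ∑ τ : Equiv.Perm (Fin k),
            Φ (fun i => A.1.orderEmbOfFin ((Finset.mem_powersetCard.mp A.2).2) (τ i)) := by
  have hsig := Finset.sum_sigma' (Finset.powersetCard k (Finset.univ : Finset (Fin m))).attach
      (fun _ => (Finset.univ : Finset (Equiv.Perm (Fin k))))
      (fun A τ => Φ (fun i => A.1.orderEmbOfFin ((Finset.mem_powersetCard.mp A.2).2) (τ i)))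
  rw [hsig]
  refine (Finset.sum_bij (fun (x : Σ _ : {A // A ∈ Finset.powersetCard k (Finset.univ : Finset (Fin m))}, Equiv.Perm (Fin k)) (_ : x ∈ _) =>
      fun i => x.1.1.orderEmbOfFin ((Finset.mem_powersetCard.mp x.1.2).2) (x.2 i))
      ?_ ?_ ?_ ?_).symm
  · rintro ⟨⟨A, hA⟩, τ⟩ -
    simp only [Finset.mem_filter, Finset.mem_univ, true_and]
    exact (A.orderEmbOfFin _).injective.comp τ.injective
  · intro x hx y hy hxy
    obtain ⟨⟨A, hA⟩, τ⟩ := x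
    obtain ⟨⟨B, hB⟩, ρ⟩ := y
    dsimp only at hxy
    have hAB : A = B := by
      apply Finset.coe_injective
      rw [← range_comp_perm A (Finset.mem_powersetCard.mp hA).2 τ,
        ← range_comp_perm B (Finset.mem_powersetCard.mp hB).2 ρ, hxy]
    subst hAB
    have hτρ : τ = ρ := by
      exact Equiv.ext fun i =>
        (A.orderEmbOfFin ((Finset.mem_powersetCard.mp hA).2)).injective (congrFun hxy i)
    simp [hτρ]
  · intro p hp
    have hpinj : Function.Injective p := by simpa using hp
    set A : Finset (Fin m) := Finset.univ.image p with hAdef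
    have hcard : A.card = k := by
      rw [hAdef, Finset.card_image_of_injective _ hpinj, Finset.card_univ, Fintype.card_fin]
    have hmemA : A ∈ Finset.powersetCard k (Finset.univ : Finset (Fin m)) :=
      Finset.mem_powersetCard.mpr ⟨Finset.subset_univ _, hcard⟩
    have hmem : ∀ i, p i ∈ A := fun i => Finset.mem_image_of_mem _ (Finset.mem_univ i)
    set u : Fin k → Fin k := fun i => (A.orderIsoOfFin hcard).symm ⟨p i, hmem i⟩ with hu
    have hui : ∀ i, (A.orderEmbOfFin hcard) (u i) = p i := by
      intro i
      rw [← Finset.coe_orderIsoOfFin_apply, hu]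
      simp
    have huinj : Function.Injective u := by
      intro a b hab
      apply hpinj
      rw [← hui a, ← hui b, hab]
    refine ⟨⟨⟨A, hmemA⟩, Equiv.ofBijective u (Finite.injective_iff_bijective.mp huinj)⟩,
      Finset.mem_sigma.mpr ⟨Finset.mem_attach _ _, Finset.mem_univ _⟩, ?_⟩
    funext i
    exact hui i
  · intros; rfl
lemma cauchy_binet {k m : ℕ} (M : Matrix (Fin k) (Fin m) ℝ) (N : Matrix (Fin m) (Fin k) ℝ) :
    det (M * N) = ∑ A ∈ (Finset.powersetCard k (Finset.univ : Finset (Fin m))).attach,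
      det (M.submatrix id (A.1.orderEmbOfFin ((Finset.mem_powersetCard.mp A.2).2)))
        * det (N.submatrix (A.1.orderEmbOfFin ((Finset.mem_powersetCard.mp A.2).2)) id) := by
  have h1 : det (M * N) = ∑ p ∈ Finset.univ.filter
      (fun p : Fin k → Fin m => Function.Injective p), Phi M N p := by
    rw [det_mul_expand]
    exact (Finset.sum_subset (Finset.filter_subset _ _)
      (fun p _ hp => Phi_eq_zero M N (by simpa using hp))).symm
  rw [h1, sum_injective_eq (Phi M N)]
  refine Finset.sum_congr rfl fun A _ => ?_
  exact (det_mul_eq_sum_perm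
    (M.submatrix id (A.1.orderEmbOfFin ((Finset.mem_powersetCard.mp A.2).2)))
    (N.submatrix (A.1.orderEmbOfFin ((Finset.mem_powersetCard.mp A.2).2)) id)).symm

noncomputable def sumEquiv {n : ℕ} (T : Finset (Fin n)) :
    (Fin T.card ⊕ Fin Tᶜ.card) ≃ Fin n :=
  Equiv.ofBijective (Sum.elim (T.orderEmbOfFin rfl) (Tᶜ.orderEmbOfFin rfl)) (by
    constructor
    · rintro (a | a) (b | b) h <;> simp only [Sum.elim_inl, Sum.elim_inr] at h
      · exact congrArg Sum.inl ((T.orderEmbOfFin rfl).injective h)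
      · exfalso
        have h1 : (Tᶜ.orderEmbOfFin rfl) b ∈ Tᶜ := Tᶜ.orderEmbOfFin_mem rfl b
        rw [← h] at h1
        exact (Finset.mem_compl.mp h1) (T.orderEmbOfFin_mem rfl a)
      · exfalso
        have h1 : (Tᶜ.orderEmbOfFin rfl) a ∈ Tᶜ := Tᶜ.orderEmbOfFin_mem rfl a
        rw [h] at h1
        exact (Finset.mem_compl.mp h1) (T.orderEmbOfFin_mem rfl b)
      · exact congrArg Sum.inr ((Tᶜ.orderEmbOfFin rfl).injective h)
    · intro i
      by_cases hi : i ∈ T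
      · have : i ∈ Set.range (T.orderEmbOfFin rfl) := by
          rw [Finset.range_orderEmbOfFin]; exact hi
        obtain ⟨a, ha⟩ := this
        exact ⟨Sum.inl a, ha⟩
      · have : i ∈ Set.range (Tᶜ.orderEmbOfFin rfl) := by
          rw [Finset.range_orderEmbOfFin]; simp [hi]
        obtain ⟨a, ha⟩ := this
        exact ⟨Sum.inr a, ha⟩)

lemma det_piecewise {n : ℕ} (N : Matrix (Fin n) (Fin n) ℝ) (T : Finset (Fin n)) :
    det ((Tᶜ : Finset (Fin n)).piecewise (1 : Matrix (Fin n) (Fin n) ℝ) N)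
      = det (N.submatrix (T.orderEmbOfFin rfl) (T.orderEmbOfFin rfl)) := by
  set B : Matrix (Fin n) (Fin n) ℝ := (Tᶜ : Finset (Fin n)).piecewise (1 : Matrix (Fin n) (Fin n) ℝ) N with hB
  rw [← det_submatrix_equiv_self (sumEquiv T) B]
  have hEq : B.submatrix (sumEquiv T) (sumEquiv T)
      = fromBlocks (N.submatrix (T.orderEmbOfFin rfl) (T.orderEmbOfFin rfl))
          (N.submatrix (T.orderEmbOfFin rfl) (Tᶜ.orderEmbOfFin rfl)) 0 1 := by
    ext i j
    have hmemT : ∀ a, (T.orderEmbOfFin rfl) a ∉ Tᶜ := by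
      intro a; simpa using T.orderEmbOfFin_mem rfl a
    have hmemTc : ∀ a, (Tᶜ.orderEmbOfFin rfl) a ∈ Tᶜ := fun a => Tᶜ.orderEmbOfFin_mem rfl a
    cases i with
    | inl a =>
      cases j with
      | inl b =>
        simp [hB, Finset.piecewise, hmemT a, (show ∀ x, _root_.sumEquiv T (Sum.inl x) = T.orderEmbOfFin rfl x from fun _ => rfl), (show ∀ x, _root_.sumEquiv T (Sum.inr x) = Tᶜ.orderEmbOfFin rfl x from fun _ => rfl), Matrix.submatrix, Matrix.of_apply, fromBlocks]
      | inr b =>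
        simp [hB, Finset.piecewise, hmemT a, (show ∀ x, _root_.sumEquiv T (Sum.inl x) = T.orderEmbOfFin rfl x from fun _ => rfl), (show ∀ x, _root_.sumEquiv T (Sum.inr x) = Tᶜ.orderEmbOfFin rfl x from fun _ => rfl), Matrix.submatrix, Matrix.of_apply, fromBlocks]
    | inr a =>
      cases j with
      | inl b =>
        have : (Tᶜ.orderEmbOfFin rfl) a ≠ (T.orderEmbOfFin rfl) b := by
          intro h
          exact hmemT b (h ▸ hmemTc a)
        simp [hB, Finset.piecewise, hmemTc a, Finset.mem_compl.mp (hmemTc a), (show ∀ x, _root_.sumEquiv T (Sum.inl x) = T.orderEmbOfFin rfl x from fun _ => rfl), (show ∀ x, _root_.sumEquiv T (Sum.inr x) = Tᶜ.orderEmbOfFin rfl x from fun _ => rfl), Matrix.submatrix, Matrix.of_apply, fromBlocks, one_apply, this]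
      | inr b =>
        have : ((Tᶜ.orderEmbOfFin rfl) a = (Tᶜ.orderEmbOfFin rfl) b) ↔ (a = b) :=
          ⟨fun h => (Tᶜ.orderEmbOfFin rfl).injective h, fun h => h ▸ rfl⟩
        simp [hB, Finset.piecewise, hmemTc a, Finset.mem_compl.mp (hmemTc a), (show ∀ x, _root_.sumEquiv T (Sum.inl x) = T.orderEmbOfFin rfl x from fun _ => rfl), (show ∀ x, _root_.sumEquiv T (Sum.inr x) = Tᶜ.orderEmbOfFin rfl x from fun _ => rfl), Matrix.submatrix, Matrix.of_apply, fromBlocks, one_apply, this]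
  rw [hEq, det_fromBlocks_zero₂₁, det_one, mul_one]

lemma det_one_add_eq {n : ℕ} (N : Matrix (Fin n) (Fin n) ℝ) :
    det (1 + N) = ∑ T : Finset (Fin n),
      det (N.submatrix (T.orderEmbOfFin rfl) (T.orderEmbOfFin rfl)) := by
  have h1 : det (1 + N) = ∑ s : Finset (Fin n),
      det (s.piecewise (1 : Matrix (Fin n) (Fin n) ℝ) N) :=
    (detRowAlternating : (Fin n → ℝ) [⋀^Fin n]→ₗ[ℝ] ℝ).toMultilinearMap.map_add_univ
      (1 : Matrix (Fin n) (Fin n) ℝ) N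
  rw [h1]
  rw [← Equiv.sum_comp (Function.Involutive.toPerm (Compl.compl (α := Finset (Fin n))) (fun s : Finset (Fin n) => compl_compl s)) (fun s => det (s.piecewise (1 : Matrix (Fin n) (Fin n) ℝ) N))]
  exact Finset.sum_congr rfl fun T _ => det_piecewise N T
end Aux

/-- `ξ(F) = det(I_n + FᵀF)` equals `1` plus the sum of the squares of all the minors of `F`:
it is a polyconvex function of `F`. -/
theorem det_one_add_transpose_mul_eq_one_add_sum_sq_minors (m n : ℕ)
    (F : Matrix (Fin m) (Fin n) ℝ) :
    (1 + Fᵀ * F).det =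
      1 + ∑ k ∈ Finset.Icc 1 (min m n),
            ∑ A ∈ Finset.powersetCard k (Finset.univ : Finset (Fin m)),
              ∑ I ∈ Finset.powersetCard k (Finset.univ : Finset (Fin n)),
                (mminor F A I) ^ 2 := by
  -- Step 1: principal minor expansion
  rw [det_one_add_eq (Fᵀ * F)]
  -- Step 2: each principal minor is a sum of squared minors via Cauchy-Binet
  have step2 : ∀ T : Finset (Fin n),
      det ((Fᵀ * F).submatrix (T.orderEmbOfFin rfl) (T.orderEmbOfFin rfl))
        = ∑ A ∈ Finset.powersetCard T.card (Finset.univ : Finset (Fin m)),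
            (mminor F A T) ^ 2 := by
    intro T
    have hsub : (Fᵀ * F).submatrix (T.orderEmbOfFin rfl) (T.orderEmbOfFin rfl)
        = (Fᵀ.submatrix (T.orderEmbOfFin rfl) _root_.id) *
          (F.submatrix _root_.id (T.orderEmbOfFin rfl)) := by
      ext i j
      simp [Matrix.mul_apply]
    rw [hsub, cauchy_binet]
    rw [← Finset.sum_attach (Finset.powersetCard T.card (Finset.univ : Finset (Fin m)))
      (fun A => (mminor F A T) ^ 2)]
    refine Finset.sum_congr rfl fun A _ => ?_
    have hA : A.1.card = T.card := (Finset.mem_powersetCard.mp A.2).2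
    have h1 : (Fᵀ.submatrix (T.orderEmbOfFin rfl) _root_.id).submatrix _root_.id
          (A.1.orderEmbOfFin hA)
        = ((F.submatrix _root_.id (T.orderEmbOfFin rfl)).submatrix
            (A.1.orderEmbOfFin hA) _root_.id)ᵀ := by
      ext i j; rfl
    rw [h1, det_transpose, ← sq]
    have h2 : (F.submatrix _root_.id (T.orderEmbOfFin rfl)).submatrix
          (A.1.orderEmbOfFin hA) _root_.id
        = Matrix.of fun p q : Fin T.card =>
            F (A.1.orderEmbOfFin hA p) (T.orderEmbOfFin rfl q) := rfl
    rw [h2, mminor, dif_pos hA]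
  simp only [step2]
  -- Step 3: reorganize the sum over all subsets by cardinality
  have h3 : ∑ T : Finset (Fin n), ∑ A ∈ Finset.powersetCard T.card
        (Finset.univ : Finset (Fin m)), (mminor F A T) ^ 2
      = ∑ k ∈ Finset.range (n + 1), ∑ T ∈ Finset.powersetCard k
          (Finset.univ : Finset (Fin n)),
          ∑ A ∈ Finset.powersetCard k (Finset.univ : Finset (Fin m)),
            (mminor F A T) ^ 2 := by
    rw [show (Finset.univ : Finset (Finset (Fin n)))
        = (Finset.univ : Finset (Fin n)).powerset from Finset.powerset_univ.symm,
      Finset.sum_powerset]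
    rw [Finset.card_univ, Fintype.card_fin]
    refine Finset.sum_congr rfl fun k _ => Finset.sum_congr rfl fun T hT => ?_
    rw [(Finset.mem_powersetCard.mp hT).2]
  rw [h3]
  have hrange : Finset.range (n + 1) = insert 0 (Finset.Icc 1 n) := by
    ext x; simp [Nat.lt_succ_iff]; omega
  rw [hrange, Finset.sum_insert (by simp)]
  have h0 : ∑ T ∈ Finset.powersetCard 0 (Finset.univ : Finset (Fin n)),
      ∑ A ∈ Finset.powersetCard 0 (Finset.univ : Finset (Fin m)),
        (mminor F A T) ^ 2 = 1 := by
    rw [Finset.powersetCard_zero, Finset.powersetCard_zero, Finset.sum_singleton,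
      Finset.sum_singleton]
    have : mminor F (∅ : Finset (Fin m)) (∅ : Finset (Fin n)) = 1 := by
      rw [mminor, dif_pos (by simp)]
      have : IsEmpty (Fin (∅ : Finset (Fin n)).card) := by
        rw [Finset.card_empty]; exact Fin.isEmpty'
      exact Matrix.det_isEmpty
    rw [this, one_pow]
  rw [h0]
  congr 1
  rw [show (∑ k ∈ Finset.Icc 1 n, ∑ T ∈ Finset.powersetCard k
        (Finset.univ : Finset (Fin n)),
        ∑ A ∈ Finset.powersetCard k (Finset.univ : Finset (Fin m)), (mminor F A T) ^ 2)
      = ∑ k ∈ Finset.Icc 1 n, ∑ A ∈ Finset.powersetCard k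
        (Finset.univ : Finset (Fin m)),
        ∑ I ∈ Finset.powersetCard k (Finset.univ : Finset (Fin n)), (mminor F A I) ^ 2
    from Finset.sum_congr rfl fun k _ => Finset.sum_comm]
  -- Step 4: restrict from Icc 1 n to Icc 1 (min m n); the extra terms vanish
  refine (Finset.sum_subset ?_ ?_).symm
  · exact Finset.Icc_subset_Icc_right (min_le_right m n)
  · intro k hk hk'
    have hkm : m < k := by
      simp only [Finset.mem_Icc] at hk hk'
      omega
    have : Finset.powersetCard k (Finset.univ : Finset (Fin m)) = ∅ := by
      rw [Finset.powersetCard_eq_empty]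
      rwa [Finset.card_univ, Fintype.card_fin]
    rw [this]
    simp
end

section
/- Let F : ℝⁿ → ℝ^{m×n} be a C² matrix-valued map satisfying the symmetry ∂_j F_{αi} = ∂_i F_{αj} for all 1 ≤ α ≤ m and 1 ≤ i,j ≤ n. Then for every k with 2 ≤ k ≤ min{m,n}+1, every A' = {α_1 < … < α_{k−1}} ⊆ {1,…,m} and every I = {i_1 < … < i_k} ⊆ {1,…,n}, the alternating divergence of the minors vanishes: Σ_{q=1}^{k} (−1)^q ∂_{i_q}( [F]_{A', I∖{i_q}} ) = 0 identically on ℝⁿ. -/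
/-- The partial derivative `∂_i f` of a function `f : ℝⁿ → ℝ`. -/
noncomputable def pd {n : ℕ} (i : Fin n) (f : (Fin n → ℝ) → ℝ) (x : Fin n → ℝ) : ℝ :=
  fderiv ℝ f x (Pi.single i 1)

noncomputable def detCM (d : ℕ) : ContinuousMultilinearMap ℝ (fun _ : Fin d => (Fin d → ℝ)) ℝ :=
  ∑ σ : Equiv.Perm (Fin d), (Equiv.Perm.sign σ : ℤ) •
    (ContinuousMultilinearMap.mkPiAlgebra ℝ (Fin d) ℝ).compContinuousLinearMap
      (fun i => ContinuousLinearMap.proj (σ i))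

lemma detCM_apply (d : ℕ) (M : Fin d → Fin d → ℝ) :
    detCM d M = Matrix.det (Matrix.of M) := by
  rw [← Matrix.det_transpose, Matrix.det_apply]
  simp [detCM, Matrix.transpose, Units.smul_def, zsmul_eq_mul]

lemma pd_det {d n' : ℕ} (i : Fin n') (g : Fin d → (Fin n' → ℝ) → (Fin d → ℝ))
    (hg : ∀ r p, Differentiable ℝ (fun x => g r x p)) (x : Fin n' → ℝ) :
    pd i (fun y => Matrix.det (Matrix.of fun r p => g r y p)) x
      = ∑ r : Fin d, Matrix.det (Matrix.of (Function.update (fun s p => g s x p) r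
          (fun p => pd i (fun y => g r y p) x))) := by
  set g' : Fin d → (Fin n' → ℝ) →L[ℝ] (Fin d → ℝ) :=
    fun r => ContinuousLinearMap.pi fun p => fderiv ℝ (fun y => g r y p) x with hg'
  have hgr : ∀ r, HasFDerivAt (g r) (g' r) x := by
    intro r
    exact hasFDerivAt_pi.2 fun p => ((hg r p) x).hasFDerivAt
  have H := HasFDerivAt.multilinear_comp (detCM d) hgr
  have heq : (fun y => Matrix.det (Matrix.of fun r p => g r y p))
      = fun y => detCM d (fun r => g r y) := by
    funext y; rw [detCM_apply]
  rw [pd, heq, H.fderiv]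
  simp only [ContinuousLinearMap.sum_apply, ContinuousLinearMap.comp_apply,
    ContinuousMultilinearMap.toContinuousLinearMap_apply, detCM_apply]
  refine Finset.sum_congr rfl fun r _ => congrArg Matrix.det (congrArg Matrix.of ?_)
  funext s p
  rcases eq_or_ne s r with rfl | hs
  · simp [Function.update_self, pd, g']
  · simp [Function.update_of_ne hs]

lemma pair_cancel {d : ℕ} (c : Fin (d + 1) → Fin d → ℝ) (w : Fin d → ℝ)
    (q j : Fin (d + 1)) (hqj : q ≠ j) :
    (-1 : ℝ) ^ (q : ℕ) * Matrix.det (Matrix.of fun s p =>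
        if q.succAbove s = j then w p else c (q.succAbove s) p)
      + (-1 : ℝ) ^ (j : ℕ) * Matrix.det (Matrix.of fun s p =>
        if j.succAbove s = q then w p else c (j.succAbove s) p) = 0 := by
  set M : Matrix (Fin (d + 1)) (Fin (d + 1)) ℝ :=
    Matrix.of fun t => Fin.cons (if t = q ∨ t = j then (1 : ℝ) else 0)
      (fun p => if t = q ∨ t = j then w p else c t p) with hM
  have hdet0 : M.det = 0 := by
    refine Matrix.det_zero_of_row_eq hqj ?_
    funext u
    refine Fin.cases ?_ ?_ u <;> simp [hM]
  have hexp := Matrix.det_succ_column_zero M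
  rw [hdet0] at hexp
  have hsub : ∀ t : Fin (d + 1),
      (M.submatrix t.succAbove Fin.succ) = Matrix.of (fun s p =>
        if t.succAbove s = q ∨ t.succAbove s = j then w p else c (t.succAbove s) p) := by
    intro t
    funext s p
    simp [hM, Matrix.submatrix_apply]
  have hone : ∀ t : Fin (d + 1), M t 0 = if t = q ∨ t = j then (1 : ℝ) else 0 := by
    intro t; simp [hM]
  have hvanish : ∀ t ∈ Finset.univ, t ∉ ({q, j} : Finset (Fin (d + 1))) →
      (-1 : ℝ) ^ (t : ℕ) * M t 0 * (M.submatrix t.succAbove Fin.succ).det = 0 := by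
    intro t _ ht
    simp only [Finset.mem_insert, Finset.mem_singleton, not_or] at ht
    rw [hone t, if_neg (by tauto)]
    ring
  rw [← Finset.sum_subset (Finset.subset_univ ({q, j} : Finset (Fin (d + 1))))
    (fun t h1 h2 => hvanish t h1 h2), Finset.sum_pair hqj] at hexp
  rw [hone q, hone j, if_pos (Or.inl rfl), if_pos (Or.inr rfl), hsub q, hsub j] at hexp
  have e1 : (Matrix.of fun s p => if q.succAbove s = q ∨ q.succAbove s = j then w p
      else c (q.succAbove s) p) = (Matrix.of fun s p =>
        if q.succAbove s = j then w p else c (q.succAbove s) p) := by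
    funext s p
    simp [Fin.succAbove_ne q s]
  have e2 : (Matrix.of fun s p => if j.succAbove s = q ∨ j.succAbove s = j then w p
      else c (j.succAbove s) p) = (Matrix.of fun s p =>
        if j.succAbove s = q then w p else c (j.succAbove s) p) := by
    funext s p
    simp [Fin.succAbove_ne j s]
  rw [e1, e2] at hexp
  linarith [hexp]


lemma core {d : ℕ} (w : Fin (d + 1) → Fin (d + 1) → Fin d → ℝ)
    (c : Fin (d + 1) → Fin d → ℝ) (hw : ∀ q j, w q j = w j q) :
    ∑ q : Fin (d + 1), (-1 : ℝ) ^ ((q : ℕ) + 1) * ∑ r : Fin d,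
      Matrix.det (Matrix.of (Function.update (fun s => c (q.succAbove s)) r
        (w q (q.succAbove r)))) = 0 := by
  set D : Fin (d + 1) → Fin (d + 1) → ℝ := fun q j =>
    Matrix.det (Matrix.of fun s p =>
      if q.succAbove s = j then w q j p else c (q.succAbove s) p) with hD
  set T : Fin (d + 1) → Fin (d + 1) → ℝ := fun q j =>
    (-1 : ℝ) ^ ((q : ℕ) + 1) * D q j with hT
  have hup : ∀ (q : Fin (d + 1)) (r : Fin d),
      Matrix.det (Matrix.of (Function.update (fun s => c (q.succAbove s)) r
        (w q (q.succAbove r)))) = D q (q.succAbove r) := by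
    intro q r
    rw [hD]
    congr 1
    funext s p
    simp only [Matrix.of_apply]
    rw [Function.update_apply]
    by_cases hs : s = r
    · subst hs; simp
    · rw [if_neg hs, if_neg (by simpa [Fin.succAbove_right_inj] using hs)]
  have hrow : ∀ q : Fin (d + 1),
      ∑ r : Fin d, Matrix.det (Matrix.of (Function.update (fun s => c (q.succAbove s)) r
        (w q (q.succAbove r)))) = (∑ j : Fin (d + 1), D q j) - D q q := by
    intro q
    rw [Fin.sum_univ_succAbove (fun j => D q j) q]
    simp only [add_sub_cancel_left]
    exact Finset.sum_congr rfl fun r _ => hup q r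
  have hanti : ∀ q j : Fin (d + 1), q ≠ j → T q j + T j q = 0 := by
    intro q j hqj
    have hp := pair_cancel c (w q j) q j hqj
    have hq1 : (-1 : ℝ) ^ ((q : ℕ) + 1) = -(-1 : ℝ) ^ (q : ℕ) := by ring
    have hj1 : (-1 : ℝ) ^ ((j : ℕ) + 1) = -(-1 : ℝ) ^ (j : ℕ) := by ring
    rw [hT]
    simp only [hD, hq1, hj1, hw j q]
    linarith [hp]
  have key : ∀ q j : Fin (d + 1), T q j + T j q = if q = j then 2 * T q q else 0 := by
    intro q j
    by_cases h : q = j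
    · subst h; rw [if_pos rfl]; ring
    · rw [if_neg h]; exact hanti q j h
  have hA : (∑ q : Fin (d + 1), ∑ j : Fin (d + 1), T q j)
      = ∑ q : Fin (d + 1), T q q := by
    have h2 : (∑ q : Fin (d + 1), ∑ j : Fin (d + 1), (T q j + T j q))
        = (∑ q : Fin (d + 1), ∑ j : Fin (d + 1), T q j)
          + (∑ q : Fin (d + 1), ∑ j : Fin (d + 1), T q j) := by
      simp only [Finset.sum_add_distrib]
      congr 1
      exact Finset.sum_comm
    have h3 : (∑ q : Fin (d + 1), ∑ j : Fin (d + 1), (T q j + T j q))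
        = ∑ q : Fin (d + 1), 2 * T q q := by
      refine Finset.sum_congr rfl fun q _ => ?_
      simp only [key]
      simp
    rw [h3] at h2
    have h4 : ∑ q : Fin (d + 1), 2 * T q q
        = 2 * ∑ q : Fin (d + 1), T q q := by rw [Finset.mul_sum]
    rw [h4] at h2
    linarith [h2]
  calc ∑ q : Fin (d + 1), (-1 : ℝ) ^ ((q : ℕ) + 1) * ∑ r : Fin d,
        Matrix.det (Matrix.of (Function.update (fun s => c (q.succAbove s)) r
          (w q (q.succAbove r))))
      = ∑ q : Fin (d + 1), ((∑ j : Fin (d + 1), T q j) - T q q) := by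
        refine Finset.sum_congr rfl fun q _ => ?_
        rw [hrow q, hT]
        simp only [mul_sub, Finset.mul_sum]
    _ = 0 := by rw [Finset.sum_sub_distrib, hA, sub_self]

lemma mminor_eq {m n d : ℕ} (F : Matrix (Fin m) (Fin n) ℝ)
    (A : Finset (Fin m)) (I : Finset (Fin n)) (hA : A.card = d) (hI : I.card = d) :
    mminor F A I = Matrix.det (Matrix.of fun p q : Fin d =>
      F (A.orderEmbOfFin hA p) (I.orderEmbOfFin hI q)) := by
  rw [mminor, dif_pos (hA.trans hI.symm)]
  have h1 : (fun p : Fin I.card => A.orderEmbOfFin hA (Fin.cast hI p))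
      = A.orderEmbOfFin (hA.trans hI.symm) := by
    refine Finset.orderEmbOfFin_unique _ (fun p => Finset.orderEmbOfFin_mem A hA _) ?_
    exact (A.orderEmbOfFin hA).strictMono.comp (fun a b h => h)
  have h2 : (fun p : Fin I.card => I.orderEmbOfFin hI (Fin.cast hI p))
      = I.orderEmbOfFin rfl := by
    refine Finset.orderEmbOfFin_unique _ (fun p => Finset.orderEmbOfFin_mem I hI _) ?_
    exact (I.orderEmbOfFin hI).strictMono.comp (fun a b h => h)
  rw [← Matrix.det_submatrix_equiv_self (finCongr hI)
    (Matrix.of fun p q : Fin d => F (A.orderEmbOfFin hA p) (I.orderEmbOfFin hI q))]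
  congr 1

/-- If `F : ℝⁿ → ℝ^{m×n}` is `C²` and satisfies `∂_j F_{αi} = ∂_i F_{αj}`, then for every
`2 ≤ k ≤ min{m,n}+1`, every `A' ⊆ {1,…,m}` with `|A'| = k-1` and every
`I = {i₁ < … < i_k} ⊆ {1,…,n}`, the alternating divergence of the corresponding minors
vanishes: `Σ_{q=1}^{k} (−1)^q ∂_{i_q} ([F]_{A', I∖{i_q}}) = 0` on all of `ℝⁿ`. -/
theorem alternating_divergence_of_minors_vanishes (m n : ℕ)
    (F : (Fin n → ℝ) → Matrix (Fin m) (Fin n) ℝ)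
    (hF : ∀ α i, ContDiff ℝ 2 fun x => F x α i)
    (hsym : ∀ (x : Fin n → ℝ) (α : Fin m) (i j : Fin n),
      pd j (fun y => F y α i) x = pd i (fun y => F y α j) x)
    (k : ℕ) (hk1 : 2 ≤ k) (hk2 : k ≤ min m n + 1)
    (A' : Finset (Fin m)) (I : Finset (Fin n))
    (hA' : A'.card = k - 1) (hI : I.card = k) (x : Fin n → ℝ) :
    ∑ q : Fin k, (-1 : ℝ) ^ (q.val + 1) *
      pd (I.orderEmbOfFin hI q)
        (fun y => mminor (F y) A' (I.erase (I.orderEmbOfFin hI q))) x = 0 := by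

  obtain ⟨d, rfl⟩ : ∃ d, k = d + 1 := ⟨k - 1, by omega⟩
  have hA'' : A'.card = d := by omega
  set e : Fin (d + 1) → Fin n := fun q => I.orderEmbOfFin hI q with he
  set a : Fin d → Fin m := fun p => A'.orderEmbOfFin hA'' p with ha
  have hmem : ∀ q, e q ∈ I := fun q => Finset.orderEmbOfFin_mem I hI q
  have hcard : ∀ q : Fin (d + 1), (I.erase (e q)).card = d := by
    intro q
    rw [Finset.card_erase_of_mem (hmem q), hI]
    omega
  have hErase : ∀ (q : Fin (d + 1)) (r : Fin d),
      (I.erase (e q)).orderEmbOfFin (hcard q) r = e (q.succAbove r) := by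
    intro q
    refine fun r => (congrFun (Finset.orderEmbOfFin_unique (hcard q)
      (f := fun r => e (q.succAbove r)) ?_ ?_) r).symm
    · intro r
      refine Finset.mem_erase.2 ⟨?_, hmem _⟩
      have := (I.orderEmbOfFin hI).injective.ne (Fin.succAbove_ne q r)
      exact this
    · exact (I.orderEmbOfFin hI).strictMono.comp (Fin.strictMono_succAbove q)
  set c : Fin (d + 1) → Fin d → ℝ := fun j p => F x (a p) (e j) with hc
  set w : Fin (d + 1) → Fin (d + 1) → Fin d → ℝ :=
    fun q' j p => pd (e q') (fun y => F y (a p) (e j)) x with hwdef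
  have hw : ∀ q j, w q j = w j q := by
    intro q j
    funext p
    exact hsym x (a p) (e j) (e q)
  have hfun : ∀ q : Fin (d + 1), (fun y => mminor (F y) A' (I.erase (e q)))
      = fun y => Matrix.det (Matrix.of fun r p : Fin d => F y (a p) (e (q.succAbove r))) := by
    intro q
    funext y
    rw [mminor_eq (F y) A' _ hA'' (hcard q)]
    rw [← Matrix.det_transpose (Matrix.of fun p r : Fin d =>
      F y (a p) ((I.erase (e q)).orderEmbOfFin (hcard q) r))]
    congr 1
    funext r p
    simp only [Matrix.transpose_apply, Matrix.of_apply]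
    rw [hErase q r]
  have key : ∀ q : Fin (d + 1),
      pd (e q) (fun y => mminor (F y) A' (I.erase (e q))) x
        = ∑ r : Fin d, Matrix.det (Matrix.of (Function.update
            (fun s => c (q.succAbove s)) r (w q (q.succAbove r)))) := by
    intro q
    rw [hfun q]
    have hdiff : ∀ r p : Fin d, Differentiable ℝ fun y => F y (a p) (e (q.succAbove r)) :=
      fun r p => (hF (a p) (e (q.succAbove r))).differentiable (by norm_num)
    exact pd_det (e q) (fun r y p => F y (a p) (e (q.succAbove r))) hdiff x
  calc ∑ q : Fin (d + 1), (-1 : ℝ) ^ (q.val + 1) *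
        pd (e q) (fun y => mminor (F y) A' (I.erase (e q))) x
      = ∑ q : Fin (d + 1), (-1 : ℝ) ^ ((q : ℕ) + 1) * ∑ r : Fin d,
          Matrix.det (Matrix.of (Function.update (fun s => c (q.succAbove s)) r
            (w q (q.succAbove r)))) := by
        refine Finset.sum_congr rfl fun q _ => ?_
        rw [key q]
    _ = 0 := core w c hw
end

section
/- Let F : ℝ×ℝⁿ → ℝ^{m×n} and D : ℝ×ℝⁿ → ℝᵐ be C² maps, and define P_i = Σ_α F_{αi} D_α and h = √(|D|² + |P|² + ξ(F)) (which is positive since ξ(F) ≥ 1). Assume F satisfies the curl-free condition ∂_j F_{αi} = ∂_i F_{αj} for all α,i,j, and the evolution equation ∂_t F_{αi} + ∂_i( (D_α + Σ_j F_{αj} P_j)/h ) = 0. Then for every k with 1 ≤ k ≤ min{m,n} and every A = {α_1 < … < α_k} ⊆ {1,…,m}, I = {i_1 < … < i_k} ⊆ {1,…,n}, the minor [F]_{A,I} satisfies the conservation law ∂_t [F]_{A,I} = − Σ_{p,q=1}^{k} (−1)^{p+q} ∂_{i_q}( [F]_{A∖{α_p}, I∖{i_q}} (D_{α_p} + Σ_j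 F_{α_p j} P_j)/h ). -/
open Matrix

/-- Time derivative `∂_t f` of a function of `(t,x) ∈ ℝ × ℝⁿ`. -/
noncomputable def pt {n : ℕ} (f : ℝ × (Fin n → ℝ) → ℝ) (p : ℝ × (Fin n → ℝ)) : ℝ :=
  fderiv ℝ f p (1, 0)

/-- Spatial partial derivative `∂_i f` of a function of `(t,x) ∈ ℝ × ℝⁿ`. -/
noncomputable def px {n : ℕ} (i : Fin n) (f : ℝ × (Fin n → ℝ) → ℝ) (p : ℝ × (Fin n → ℝ)) : ℝ :=
  fderiv ℝ f p (0, Pi.single i 1)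

/-! ### Auxiliary lemmas -/

lemma aux_det_norm_le {k : ℕ} (N : Matrix (Fin k) (Fin k) ℝ) :
    ‖N.det‖ ≤ (Nat.factorial k : ℝ) * ∏ i, ‖N i‖ := by
  rw [Matrix.det_apply]
  refine (norm_sum_le _ _).trans ?_
  have hb : ∀ σ : Equiv.Perm (Fin k),
      ‖Equiv.Perm.sign σ • ∏ i, N (σ i) i‖ ≤ ∏ i, ‖N i‖ := by
    intro σ
    rw [Units.smul_def, zsmul_eq_mul, norm_mul]
    have h1 : ‖((Equiv.Perm.sign σ : ℤ) : ℝ)‖ = 1 := by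
      rcases Int.units_eq_one_or (Equiv.Perm.sign σ) with h | h <;> simp [h]
    rw [h1, one_mul]
    calc ‖∏ i, N (σ i) i‖
        = ∏ i, ‖N (σ i) i‖ := by rw [norm_prod]
      _ ≤ ∏ i, ‖N (σ i)‖ :=
          Finset.prod_le_prod (fun i _ => norm_nonneg _) fun i _ => norm_le_pi_norm (N (σ i)) i
      _ = ∏ i, ‖N i‖ := Equiv.prod_comp σ fun i => ‖N i‖
  refine (Finset.sum_le_sum fun σ _ => hb σ).trans ?_
  rw [Finset.sum_const, Finset.card_univ, Fintype.card_perm, nsmul_eq_mul, Fintype.card_fin]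

/-- Determinant as a continuous multilinear map in the rows. -/
noncomputable def detCML (k : ℕ) : ContinuousMultilinearMap ℝ (fun _ : Fin k => (Fin k → ℝ)) ℝ :=
  MultilinearMap.mkContinuous
    (Matrix.detRowAlternating : (Fin k → ℝ) [⋀^Fin k]→ₗ[ℝ] ℝ).toMultilinearMap
    (Nat.factorial k) (fun M => aux_det_norm_le (Matrix.of M))

section DetDeriv

variable {E : Type*} [NormedAddCommGroup E] [NormedSpace ℝ E]

lemma aux_hasFDerivAt_det {k : ℕ} (f : E → Fin k → Fin k → ℝ)
    (M' : Fin k → Fin k → E →L[ℝ] ℝ) (x : E)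
    (hM : ∀ r s, HasFDerivAt (fun q => f q r s) (M' r s) x) :
    HasFDerivAt (fun q => (Matrix.of (f q)).det)
      ((detCML k).linearDeriv (f x) ∘L
        (ContinuousLinearMap.pi fun r => ContinuousLinearMap.pi fun s => M' r s)) x := by
  have h1 : HasFDerivAt f
      (ContinuousLinearMap.pi fun r => ContinuousLinearMap.pi fun s => M' r s) x :=
    hasFDerivAt_pi.mpr fun r => hasFDerivAt_pi.mpr fun s => hM r s
  exact ((detCML k).hasFDerivAt (x := f x)).comp x h1

lemma aux_det_deriv_apply {k : ℕ} (f : E → Fin k → Fin k → ℝ)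
    (M' : Fin k → Fin k → E →L[ℝ] ℝ) (x : E) (v : E) :
    ((detCML k).linearDeriv (f x) ∘L
        (ContinuousLinearMap.pi fun r => ContinuousLinearMap.pi fun s => M' r s)) v
      = ∑ r, ((Matrix.of (f x)).updateRow r (fun s => M' r s v)).det := by
  rw [ContinuousLinearMap.comp_apply, ContinuousMultilinearMap.linearDeriv_apply]
  exact Finset.sum_congr rfl fun r _ => rfl

lemma aux_differentiableAt_det {k : ℕ} (f : E → Fin k → Fin k → ℝ) (x : E)
    (hM : ∀ r s, DifferentiableAt ℝ (fun q => f q r s) x) :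
    DifferentiableAt ℝ (fun q => (Matrix.of (f q)).det) x :=
  (aux_hasFDerivAt_det f (fun r s => fderiv ℝ (fun q => f q r s) x) x
    fun r s => (hM r s).hasFDerivAt).differentiableAt

lemma aux_fderiv_det_apply {k : ℕ} (f : E → Fin k → Fin k → ℝ) (x : E) (v : E)
    (hM : ∀ r s, DifferentiableAt ℝ (fun q => f q r s) x) :
    fderiv ℝ (fun q => (Matrix.of (f q)).det) x v
      = ∑ r, ((Matrix.of (f x)).updateRow r (fun s => fderiv ℝ (fun q => f q r s) x v)).det := by
  rw [(aux_hasFDerivAt_det f (fun r s => fderiv ℝ (fun q => f q r s) x) x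
    fun r s => (hM r s).hasFDerivAt).fderiv]
  exact aux_det_deriv_apply f _ x v

end DetDeriv

lemma aux_det_updateRow_eq_sum {k : ℕ} (A : Matrix (Fin k) (Fin k) ℝ) (r : Fin k)
    (v : Fin k → ℝ) :
    (A.updateRow r v).det = ∑ s, v s * (A.updateRow r (Pi.single s 1)).det := by
  have hv : v = ∑ s, v s • (Pi.single s 1 : Fin k → ℝ) := by
    ext j
    simp [Pi.single_apply]
  calc (A.updateRow r v).det
      = (detCML k) (Function.update (fun i => A i) r v) := rfl
    _ = ((detCML k).toContinuousLinearMap (fun i => A i) r) v := by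
        rw [ContinuousMultilinearMap.toContinuousLinearMap_apply]
    _ = ∑ s, v s * (A.updateRow r (Pi.single s 1)).det := by
        conv_lhs => rw [hv, map_sum]
        refine Finset.sum_congr rfl fun s _ => ?_
        rw [_root_.map_smul, smul_eq_mul]
        rfl

lemma aux_mminor_eq {m n k : ℕ} (F : Matrix (Fin m) (Fin n) ℝ) (A : Finset (Fin m))
    (I : Finset (Fin n)) (hA : A.card = k) (hI : I.card = k) :
    mminor F A I = Matrix.det (Matrix.of fun p q : Fin k =>
      F (A.orderEmbOfFin hA p) (I.orderEmbOfFin hI q)) := by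
  subst hI
  rw [mminor, dif_pos hA]

lemma aux_orderEmbOfFin_erase {N : ℕ} (s : Finset (Fin N)) {k : ℕ}
    (h : s.card = k + 1) (p : Fin (k + 1))
    (h' : (s.erase (s.orderEmbOfFin h p)).card = k) (q : Fin k) :
    (s.erase (s.orderEmbOfFin h p)).orderEmbOfFin h' q
      = s.orderEmbOfFin h (p.succAbove q) := by
  have hmem : ∀ i : Fin k, s.orderEmbOfFin h (p.succAbove i) ∈ s.erase (s.orderEmbOfFin h p) := by
    intro i
    rw [Finset.mem_erase]
    refine ⟨fun hc => ?_, Finset.orderEmbOfFin_mem s h _⟩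
    exact Fin.succAbove_ne p i ((s.orderEmbOfFin h).injective hc)
  have hmono : StrictMono fun i : Fin k => s.orderEmbOfFin h (p.succAbove i) :=
    (s.orderEmbOfFin h).strictMono.comp (Fin.strictMono_succAbove p)
  exact (congrFun (Finset.orderEmbOfFin_unique h' hmem hmono) q).symm

lemma aux_det_updateRow_single {k : ℕ} (M : Matrix (Fin (k + 1)) (Fin (k + 1)) ℝ)
    (p q : Fin (k + 1)) :
    (M.updateRow p (Pi.single q 1)).det
      = (-1) ^ ((p : ℕ) + (q : ℕ)) * (M.submatrix p.succAbove q.succAbove).det := by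
  rw [det_succ_row _ p]
  rw [Finset.sum_eq_single q]
  · rw [updateRow_self]
    simp [Matrix.submatrix_updateRow_succAbove]
  · intro j _ hj
    rw [updateRow_self]
    simp [Pi.single_eq_of_ne hj]
  · simp

lemma aux_det_double_update_swap {k : ℕ} (M : Matrix (Fin k) (Fin k) ℝ) (p r : Fin k)
    (hpr : r ≠ p) (u v : Fin k → ℝ) :
    ((M.updateRow p u).updateRow r v).det = - ((M.updateRow p v).updateRow r u).det := by
  have hM : (M.updateRow p v).updateRow r u
      = ((M.updateRow p u).updateRow r v).submatrix (Equiv.swap p r) id := by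
    funext i j
    rw [Matrix.submatrix_apply, id_eq]
    simp only [Matrix.updateRow_apply, Equiv.swap_apply_def]
    split_ifs <;> simp_all
  have hdp := Matrix.det_permute (Equiv.swap p r) ((M.updateRow p u).updateRow r v)
  rw [hM, hdp, Equiv.Perm.sign_swap (Ne.symm hpr)]
  simp

lemma aux_sum_sym_antisym {k : ℕ} (c d : Fin k → Fin k → ℝ)
    (hc : ∀ i j, c i j = c j i) (hd : ∀ i j, d i j = - d j i) :
    ∑ i, ∑ j, c i j * d i j = 0 := by
  have h1 : ∑ i, ∑ j, c i j * d i j = ∑ i, ∑ j, c j i * d j i := Finset.sum_comm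
  have h2 : ∀ i j, c j i * d j i = - (c i j * d i j) := by
    intro i j
    rw [hc j i, hd j i]
    ring
  have h3 : ∑ i, ∑ j, c i j * d i j = - ∑ i, ∑ j, c i j * d i j := by
    conv_lhs => rw [h1]
    calc ∑ i, ∑ j, c j i * d j i = ∑ i, ∑ j, -(c i j * d i j) :=
          Finset.sum_congr rfl fun i _ => Finset.sum_congr rfl fun j _ => h2 i j
      _ = - ∑ i, ∑ j, c i j * d i j := by simp [Finset.sum_neg_distrib]
  linarith

lemma aux_px_mul {n : ℕ} (i : Fin n) (f g : ℝ × (Fin n → ℝ) → ℝ) (p : ℝ × (Fin n → ℝ))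
    (hf : DifferentiableAt ℝ f p) (hg : DifferentiableAt ℝ g p) :
    px i (fun q => f q * g q) p = f p * px i g p + g p * px i f p := by
  unfold px
  rw [fderiv_fun_mul hf hg]
  simp

lemma aux_px_const_mul {n : ℕ} (i : Fin n) (c : ℝ) (f : ℝ × (Fin n → ℝ) → ℝ)
    (p : ℝ × (Fin n → ℝ)) (hf : DifferentiableAt ℝ f p) :
    px i (fun q => c * f q) p = c * px i f p := by
  unfold px
  rw [fderiv_const_mul hf c]
  simp

/-! ### The core identity -/

lemma aux_core {n k' : ℕ} (f : ℝ × (Fin n → ℝ) → Fin (k' + 1) → Fin (k' + 1) → ℝ)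
    (G : ℝ × (Fin n → ℝ) → Fin (k' + 1) → ℝ) (b : Fin (k' + 1) → Fin n)
    (p : ℝ × (Fin n → ℝ))
    (hfd : ∀ r s, DifferentiableAt ℝ (fun q => f q r s) p)
    (hGd : ∀ r, DifferentiableAt ℝ (fun q => G q r) p)
    (hcurl' : ∀ r s s', px (b s') (fun q => f q r s) p = px (b s) (fun q => f q r s') p)
    (hevol' : ∀ r s, pt (fun q => f q r s) p = - px (b s) (fun q => G q r) p) :
    pt (fun q => (Matrix.of (f q)).det) p
      = - ∑ pp : Fin (k' + 1), ∑ qq : Fin (k' + 1), (-1 : ℝ) ^ ((pp : ℕ) + (qq : ℕ)) *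
          px (b qq) (fun q =>
            ((Matrix.of (f q)).submatrix pp.succAbove qq.succAbove).det * G q pp) p := by
  -- step A : time derivative of det by rows
  have hA1 : pt (fun q => (Matrix.of (f q)).det) p
      = ∑ r, ((Matrix.of (f p)).updateRow r (fun s => pt (fun q => f q r s) p)).det :=
    aux_fderiv_det_apply f p (1, 0) hfd
  -- Left side in canonical form
  have hL2 : ∀ r, ((Matrix.of (f p)).updateRow r (fun s => pt (fun q => f q r s) p)).det
      = ∑ s, -((px (b s) (fun q => G q r) p) *
          ((-1 : ℝ) ^ ((r : ℕ) + (s : ℕ)) *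
            ((Matrix.of (f p)).submatrix r.succAbove s.succAbove).det)) := by
    intro r
    rw [show (fun s => pt (fun q => f q r s) p)
        = fun s => - px (b s) (fun q => G q r) p from funext fun s => hevol' r s]
    rw [aux_det_updateRow_eq_sum]
    refine Finset.sum_congr rfl fun s _ => ?_
    rw [aux_det_updateRow_single]
    ring
  -- differentiability of the submatrix determinants
  have hsubd : ∀ (pp qq : Fin (k' + 1)),
      DifferentiableAt ℝ
        (fun q => ((Matrix.of (f q)).submatrix pp.succAbove qq.succAbove).det) p :=
    fun pp qq => aux_differentiableAt_det
      (fun q r s => f q (pp.succAbove r) (qq.succAbove s)) p (fun r s => hfd _ _)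
  -- differentiability of the updated-row determinants
  have hentd : ∀ (pp qq : Fin (k' + 1)) (r s : Fin (k' + 1)),
      DifferentiableAt ℝ
        (fun q => ((Matrix.of (f q)).updateRow pp (Pi.single qq 1)) r s) p := by
    intro pp qq r s
    rcases eq_or_ne r pp with rfl | hr
    · have he : (fun q => ((Matrix.of (f q)).updateRow r (Pi.single qq 1)) r s)
          = fun _ => (Pi.single qq 1 : Fin (k' + 1) → ℝ) s :=
        funext fun q => by rw [Matrix.updateRow_self]
      rw [he]
      exact differentiableAt_const _
    · have he : (fun q => ((Matrix.of (f q)).updateRow pp (Pi.single qq 1)) r s)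
          = fun q => f q r s :=
        funext fun q => by rw [Matrix.updateRow_apply, if_neg hr]; rfl
      rw [he]
      exact hfd r s
  have hupdd : ∀ (pp qq : Fin (k' + 1)),
      DifferentiableAt ℝ
        (fun q => ((Matrix.of (f q)).updateRow pp (Pi.single qq 1)).det) p :=
    fun pp qq => aux_differentiableAt_det
      (fun q r s => ((Matrix.of (f q)).updateRow pp (Pi.single qq 1)) r s) p
      (fun r s => hentd pp qq r s)
  -- cofactor rewriting of submatrix determinant
  have hcof : ∀ (pp qq : Fin (k' + 1)),
      (fun q => ((Matrix.of (f q)).submatrix pp.succAbove qq.succAbove).det)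
        = fun q => (-1 : ℝ) ^ ((pp : ℕ) + (qq : ℕ)) *
            ((Matrix.of (f q)).updateRow pp (Pi.single qq 1)).det := by
    intro pp qq
    funext q
    rw [aux_det_updateRow_single, ← mul_assoc, ← pow_add,
      Even.neg_one_pow ⟨(pp : ℕ) + (qq : ℕ), rfl⟩, one_mul]
  -- Piola identity
  have hpiola : ∀ pp : Fin (k' + 1),
      ∑ qq, px (b qq) (fun q => ((Matrix.of (f q)).updateRow pp (Pi.single qq 1)).det) p
        = 0 := by
    intro pp
    have hstep : ∀ qq : Fin (k' + 1),
        px (b qq) (fun q => ((Matrix.of (f q)).updateRow pp (Pi.single qq 1)).det) p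
          = ∑ r, (((Matrix.of (f p)).updateRow pp (Pi.single qq 1)).updateRow r
              (fun s => px (b qq)
                (fun q => ((Matrix.of (f q)).updateRow pp (Pi.single qq 1)) r s) p)).det :=
      fun qq => aux_fderiv_det_apply
        (fun q r s => ((Matrix.of (f q)).updateRow pp (Pi.single qq 1)) r s) p
        (0, Pi.single (b qq) 1) (hentd pp qq)
    rw [show (fun qq => px (b qq)
        (fun q => ((Matrix.of (f q)).updateRow pp (Pi.single qq 1)).det) p)
      = fun qq => ∑ r, (((Matrix.of (f p)).updateRow pp (Pi.single qq 1)).updateRow r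
          (fun s => px (b qq)
            (fun q => ((Matrix.of (f q)).updateRow pp (Pi.single qq 1)) r s) p)).det
      from funext hstep]
    rw [Finset.sum_comm]
    refine Finset.sum_eq_zero fun r _ => ?_
    rcases eq_or_ne r pp with rfl | hr
    · -- the row `pp` is constant, so every term vanishes
      refine Finset.sum_eq_zero fun qq _ => ?_
      have hvec : (fun s => px (b qq)
          (fun q => ((Matrix.of (f q)).updateRow r (Pi.single qq 1)) r s) p)
          = fun _ => (0 : ℝ) := by
        funext s
        have he : (fun q => ((Matrix.of (f q)).updateRow r (Pi.single qq 1)) r s)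
            = fun _ => (Pi.single qq 1 : Fin (k' + 1) → ℝ) s :=
          funext fun q => by rw [Matrix.updateRow_self]
        rw [he]
        unfold px
        rw [fderiv_fun_const]
        rfl
      rw [hvec]
      exact Matrix.det_eq_zero_of_row_eq_zero r fun j => by rw [Matrix.updateRow_self]
    · -- antisymmetric cancellation
      have hvec : ∀ qq : Fin (k' + 1), (fun s => px (b qq)
          (fun q => ((Matrix.of (f q)).updateRow pp (Pi.single qq 1)) r s) p)
          = fun s => px (b s) (fun q => f q r qq) p := by
        intro qq
        funext s
        have he : (fun q => ((Matrix.of (f q)).updateRow pp (Pi.single qq 1)) r s)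
            = fun q => f q r s :=
          funext fun q => by rw [Matrix.updateRow_apply, if_neg hr]; rfl
        rw [he, hcurl' r s qq]
      have hexp : ∀ qq : Fin (k' + 1),
          (((Matrix.of (f p)).updateRow pp (Pi.single qq 1)).updateRow r
            (fun s => px (b qq)
              (fun q => ((Matrix.of (f q)).updateRow pp (Pi.single qq 1)) r s) p)).det
          = ∑ s, (px (b s) (fun q => f q r qq) p) *
              (((Matrix.of (f p)).updateRow pp (Pi.single qq 1)).updateRow r
                (Pi.single s 1)).det := by
        intro qq
        rw [hvec qq, aux_det_updateRow_eq_sum]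
      rw [show (fun qq => (((Matrix.of (f p)).updateRow pp (Pi.single qq 1)).updateRow r
          (fun s => px (b qq)
            (fun q => ((Matrix.of (f q)).updateRow pp (Pi.single qq 1)) r s) p)).det)
        = fun qq => ∑ s, (px (b s) (fun q => f q r qq) p) *
            (((Matrix.of (f p)).updateRow pp (Pi.single qq 1)).updateRow r
              (Pi.single s 1)).det from funext hexp]
      refine aux_sum_sym_antisym
        (fun qq s => px (b s) (fun q => f q r qq) p)
        (fun qq s => (((Matrix.of (f p)).updateRow pp (Pi.single qq 1)).updateRow r
          (Pi.single s 1)).det) (fun i j => ?_) (fun i j => ?_)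
      · exact hcurl' r i j
      · exact aux_det_double_update_swap (Matrix.of (f p)) pp r hr _ _
  -- per-term computation on the right-hand side
  have hX : ∀ pp qq : Fin (k' + 1),
      (-1 : ℝ) ^ ((pp : ℕ) + (qq : ℕ)) *
        px (b qq) (fun q =>
          ((Matrix.of (f q)).submatrix pp.succAbove qq.succAbove).det * G q pp) p
      = -(-((px (b qq) (fun q => G q pp) p) *
            ((-1 : ℝ) ^ ((pp : ℕ) + (qq : ℕ)) *
              ((Matrix.of (f p)).submatrix pp.succAbove qq.succAbove).det)))
        + G p pp * px (b qq)
            (fun q => ((Matrix.of (f q)).updateRow pp (Pi.single qq 1)).det) p := by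
    intro pp qq
    rw [aux_px_mul (b qq) _ _ p (hsubd pp qq) (hGd pp)]
    have h1 : px (b qq)
        (fun q => ((Matrix.of (f q)).submatrix pp.succAbove qq.succAbove).det) p
        = (-1 : ℝ) ^ ((pp : ℕ) + (qq : ℕ)) *
          px (b qq) (fun q => ((Matrix.of (f q)).updateRow pp (Pi.single qq 1)).det) p := by
      rw [hcof pp qq]
      exact aux_px_const_mul (b qq) _ _ p (hupdd pp qq)
    rw [h1]
    have ht : ((-1 : ℝ) ^ ((pp : ℕ) + (qq : ℕ))) * ((-1 : ℝ) ^ ((pp : ℕ) + (qq : ℕ))) = 1 := by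
      rw [← pow_add]
      exact Even.neg_one_pow ⟨(pp : ℕ) + (qq : ℕ), rfl⟩
    linear_combination (G p pp *
      px (b qq) (fun q => ((Matrix.of (f q)).updateRow pp (Pi.single qq 1)).det) p) * ht
  -- assemble
  rw [hA1]
  rw [show (fun pp : Fin (k' + 1) => ∑ qq : Fin (k' + 1), (-1 : ℝ) ^ ((pp : ℕ) + (qq : ℕ)) *
      px (b qq) (fun q =>
        ((Matrix.of (f q)).submatrix pp.succAbove qq.succAbove).det * G q pp) p)
    = fun pp : Fin (k' + 1) => ∑ qq : Fin (k' + 1), (-(-((px (b qq) (fun q => G q pp) p) *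
        ((-1 : ℝ) ^ ((pp : ℕ) + (qq : ℕ)) *
          ((Matrix.of (f p)).submatrix pp.succAbove qq.succAbove).det)))
      + G p pp * px (b qq)
          (fun q => ((Matrix.of (f q)).updateRow pp (Pi.single qq 1)).det) p)
    from funext fun pp => Finset.sum_congr rfl fun qq _ => hX pp qq]
  have hsplit : ∀ pp : Fin (k' + 1), ∑ qq, (-(-((px (b qq) (fun q => G q pp) p) *
      ((-1 : ℝ) ^ ((pp : ℕ) + (qq : ℕ)) *
        ((Matrix.of (f p)).submatrix pp.succAbove qq.succAbove).det)))
    + G p pp * px (b qq)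
        (fun q => ((Matrix.of (f q)).updateRow pp (Pi.single qq 1)).det) p)
    = - ∑ qq, -((px (b qq) (fun q => G q pp) p) *
        ((-1 : ℝ) ^ ((pp : ℕ) + (qq : ℕ)) *
          ((Matrix.of (f p)).submatrix pp.succAbove qq.succAbove).det)) := by
    intro pp
    rw [Finset.sum_add_distrib, ← Finset.mul_sum, hpiola pp, mul_zero, add_zero,
      ← Finset.sum_neg_distrib]
  rw [show (fun pp : Fin (k' + 1) => ∑ qq : Fin (k' + 1), (-(-((px (b qq) (fun q => G q pp) p) *
      ((-1 : ℝ) ^ ((pp : ℕ) + (qq : ℕ)) *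
        ((Matrix.of (f p)).submatrix pp.succAbove qq.succAbove).det)))
    + G p pp * px (b qq)
        (fun q => ((Matrix.of (f q)).updateRow pp (Pi.single qq 1)).det) p))
    = fun pp : Fin (k' + 1) => - ∑ qq : Fin (k' + 1), -((px (b qq) (fun q => G q pp) p) *
        ((-1 : ℝ) ^ ((pp : ℕ) + (qq : ℕ)) *
          ((Matrix.of (f p)).submatrix pp.succAbove qq.succAbove).det))
    from funext hsplit]
  rw [Finset.sum_neg_distrib, neg_neg]
  exact Finset.sum_congr rfl fun r _ => hL2 r

/-! ### Main theorem -/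

/-- Conservation laws for the minors `[F]_{A,I}`:  if `F` is curl-free and satisfies the
evolution equation `∂_t F_{αi} + ∂_i((D_α + Σ_j F_{αj}P_j)/h) = 0`, then
`∂_t [F]_{A,I} = − Σ_{p,q} (−1)^{p+q} ∂_{i_q}([F]_{A∖{α_p},I∖{i_q}} (D_{α_p} + Σ_j F_{α_p j}P_j)/h)`. -/
theorem conservation_law_for_minors (m n : ℕ)
    (F : ℝ × (Fin n → ℝ) → Matrix (Fin m) (Fin n) ℝ)
    (D : ℝ × (Fin n → ℝ) → Fin m → ℝ)
    (hF : ∀ α i, ContDiff ℝ 2 fun p => F p α i)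
    (hD : ∀ α, ContDiff ℝ 2 fun p => D p α)
    (P : ℝ × (Fin n → ℝ) → Fin n → ℝ)
    (hP : P = fun p i => ∑ α, F p α i * D p α)
    (h : ℝ × (Fin n → ℝ) → ℝ)
    (hh : h = fun p => Real.sqrt (∑ α, (D p α) ^ 2 + ∑ i, (P p i) ^ 2 + (1 + (F p)ᵀ * F p).det))
    (hcurl : ∀ p (α : Fin m) (i j : Fin n),
      px j (fun q => F q α i) p = px i (fun q => F q α j) p)
    (hevol : ∀ p (α : Fin m) (i : Fin n),
      pt (fun q => F q α i) p
        + px i (fun q => (D q α + ∑ j, F q α j * P q j) / h q) p = 0)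
    (k : ℕ) (hk1 : 1 ≤ k) (hk2 : k ≤ min m n)
    (A : Finset (Fin m)) (I : Finset (Fin n)) (hA : A.card = k) (hI : I.card = k)
    (p : ℝ × (Fin n → ℝ)) :
    pt (fun q => mminor (F q) A I) p =
      - ∑ pp : Fin k, ∑ qq : Fin k, (-1 : ℝ) ^ ((pp.val + 1) + (qq.val + 1)) *
          px (I.orderEmbOfFin hI qq)
            (fun q =>
              mminor (F q) (A.erase (A.orderEmbOfFin hA pp)) (I.erase (I.orderEmbOfFin hI qq))
                * (D q (A.orderEmbOfFin hA pp) + ∑ j, F q (A.orderEmbOfFin hA pp) j * P q j)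
                / h q) p := by
  obtain ⟨k', rfl⟩ : ∃ k', k = k' + 1 := ⟨k - 1, (Nat.succ_pred_eq_of_pos hk1).symm⟩
  -- differentiability facts
  have hde : ∀ α i, Differentiable ℝ fun q => F q α i :=
    fun α i => (hF α i).differentiable two_ne_zero
  have hDe : ∀ α, Differentiable ℝ fun q => D q α :=
    fun α => (hD α).differentiable two_ne_zero
  have hPe : ∀ j, Differentiable ℝ fun q => P q j := by
    intro j
    rw [hP]
    exact Differentiable.fun_sum fun α _ => (hde α j).mul (hDe α)
  have hnume : ∀ α, Differentiable ℝ fun q => D q α + ∑ j, F q α j * P q j :=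
    fun α => (hDe α).add (Differentiable.fun_sum fun j _ => (hde α j).mul (hPe j))
  have hdet1 : ∀ x, DifferentiableAt ℝ (fun q => (1 + (F q)ᵀ * F q).det) x := by
    intro x
    have := aux_differentiableAt_det
      (fun q i j => (1 + (F q)ᵀ * F q : Matrix (Fin n) (Fin n) ℝ) i j) x (fun i j => by
      have he : (fun q => (1 + (F q)ᵀ * F q : Matrix (Fin n) (Fin n) ℝ) i j)
          = fun q => (if i = j then (1 : ℝ) else 0) + ∑ α, F q α i * F q α j :=
        funext fun q => by
          simp [Matrix.add_apply, Matrix.mul_apply, Matrix.one_apply, Matrix.transpose_apply]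
      rw [he]
      exact (differentiableAt_const _).add
        (DifferentiableAt.fun_sum fun α _ => ((hde α i) x).mul ((hde α j) x)))
    exact this
  have hdetpos : ∀ x, 0 < (1 + (F x)ᵀ * F x).det := by
    intro x
    have h1 : ((F x)ᵀ * F x).PosSemidef := by
      have h2 := Matrix.posSemidef_conjTranspose_mul_self (F x)
      rwa [Matrix.conjTranspose_eq_transpose_of_trivial] at h2
    exact (Matrix.PosDef.add_posSemidef Matrix.PosDef.one h1).det_pos
  have hupos : ∀ x, 0 < ∑ α, (D x α) ^ 2 + ∑ i, (P x i) ^ 2 + (1 + (F x)ᵀ * F x).det := by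
    intro x
    have h1 : (0:ℝ) ≤ ∑ α, (D x α) ^ 2 := Finset.sum_nonneg fun α _ => sq_nonneg _
    have h2 : (0:ℝ) ≤ ∑ i, (P x i) ^ 2 := Finset.sum_nonneg fun i _ => sq_nonneg _
    have := hdetpos x
    linarith
  have hud : ∀ x, DifferentiableAt ℝ
      (fun q => ∑ α, (D q α) ^ 2 + ∑ i, (P q i) ^ 2 + (1 + (F q)ᵀ * F q).det) x :=
    fun x => (((DifferentiableAt.fun_sum fun α _ => ((hDe α) x).pow 2).add
      (DifferentiableAt.fun_sum fun i _ => ((hPe i) x).pow 2)).add (hdet1 x))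
  have hhe : ∀ x, DifferentiableAt ℝ h x := by
    intro x
    rw [hh]
    exact DifferentiableAt.sqrt (hud x) (hupos x).ne'
  have hhpos : ∀ x, 0 < h x := by
    intro x
    rw [hh]
    exact Real.sqrt_pos.mpr (hupos x)
  have hGd : ∀ (α : Fin m) x, DifferentiableAt ℝ
      (fun q => (D q α + ∑ j, F q α j * P q j) / h q) x := by
    intro α x
    have hrw : (fun q => (D q α + ∑ j, F q α j * P q j) / h q)
        = fun q => (D q α + ∑ j, F q α j * P q j) * (h q)⁻¹ :=
      funext fun q => div_eq_mul_inv _ _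
    rw [hrw]
    exact ((hnume α) x).mul ((hhe x).inv (hhpos x).ne')
  -- instantiate the core identity
  have key := aux_core
    (fun q r s => F q (A.orderEmbOfFin hA r) (I.orderEmbOfFin hI s))
    (fun q r => (D q (A.orderEmbOfFin hA r) + ∑ j, F q (A.orderEmbOfFin hA r) j * P q j) / h q)
    (fun s => I.orderEmbOfFin hI s) p
    (fun r s => (hde _ _) p)
    (fun r => hGd _ p)
    (fun r s s' => hcurl p _ _ _)
    (fun r s => eq_neg_of_add_eq_zero_left (hevol p _ _))
  -- erasure cardinalities
  have hAe : ∀ pp : Fin (k' + 1), (A.erase (A.orderEmbOfFin hA pp)).card = k' := by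
    intro pp
    rw [Finset.card_erase_of_mem (Finset.orderEmbOfFin_mem A hA pp), hA]
    omega
  have hIe : ∀ qq : Fin (k' + 1), (I.erase (I.orderEmbOfFin hI qq)).card = k' := by
    intro qq
    rw [Finset.card_erase_of_mem (Finset.orderEmbOfFin_mem I hI qq), hI]
    omega
  -- left-hand side
  have hL : (fun q => mminor (F q) A I)
      = fun q => (Matrix.of (fun r s : Fin (k' + 1) =>
          F q (A.orderEmbOfFin hA r) (I.orderEmbOfFin hI s))).det :=
    funext fun q => aux_mminor_eq (F q) A I hA hI
  rw [hL, key]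
  -- right-hand side, term by term
  congr 1
  refine Finset.sum_congr rfl fun pp _ => Finset.sum_congr rfl fun qq _ => ?_
  have hsign : (-1 : ℝ) ^ ((pp.val + 1) + (qq.val + 1)) = (-1 : ℝ) ^ (pp.val + qq.val) := by
    rw [show (pp.val + 1) + (qq.val + 1) = (pp.val + qq.val) + 2 from by omega, pow_add]
    norm_num
  have hfun : (fun q =>
      mminor (F q) (A.erase (A.orderEmbOfFin hA pp)) (I.erase (I.orderEmbOfFin hI qq))
        * (D q (A.orderEmbOfFin hA pp) + ∑ j, F q (A.orderEmbOfFin hA pp) j * P q j) / h q)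
      = fun q => ((Matrix.of (fun r s : Fin (k' + 1) =>
            F q (A.orderEmbOfFin hA r) (I.orderEmbOfFin hI s))).submatrix
              pp.succAbove qq.succAbove).det *
          ((D q (A.orderEmbOfFin hA pp) + ∑ j, F q (A.orderEmbOfFin hA pp) j * P q j) / h q) := by
    funext q
    rw [aux_mminor_eq (F q) _ _ (hAe pp) (hIe qq), mul_div_assoc]
    congr 2
    ext r s
    simp only [Matrix.submatrix_apply, Matrix.of_apply]
    rw [aux_orderEmbOfFin_erase A hA pp (hAe pp) r, aux_orderEmbOfFin_erase I hI qq (hIe qq) s]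
  rw [hsign, hfun]
end

section
/- Let F be an m×n real matrix and ξ(F) = det(I_n + FᵀF). Then for all 1 ≤ α ≤ m and 1 ≤ i ≤ n, ξ(F) Σ_{j=1}^{n} ((I_n + FᵀF)⁻¹)_{ij} F_{αj} = Σ_{A,I} (−1)^{O_A(α)+O_I(i)} [F]_{A,I} [F]_{A∖{α}, I∖{i}}, where the sum ranges over all A ⊆ {1,…,m} and I ⊆ {1,…,n} with |A| = |I| ≥ 1, α ∈ A and i ∈ I. -/
open Matrix

/-- `O_A(a)`: the number of elements of `A ∪ {a}` that are `≤ a`. -/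
def ordIdx {N : ℕ} (A : Finset (Fin N)) (a : Fin N) : ℕ :=
  ((insert a A).filter (fun x => x ≤ a)).card

open Finset Function Equiv

section CauchyBinet

variable {R : Type*} [CommRing R]

local notation "ε " σ:arg => ((Equiv.Perm.sign σ : ℤ) : R)

lemma det_mul_aux' {s m : ℕ} {M : Matrix (Fin s) (Fin m) R} {N : Matrix (Fin m) (Fin s) R}
    {p : Fin s → Fin m} (H : ¬Function.Injective p) :
    (∑ σ : Equiv.Perm (Fin s), ε σ * ∏ x, M (σ x) (p x) * N (p x) x) = 0 := by
  obtain ⟨i, j, hpij, hij⟩ : ∃ i j, p i = p j ∧ i ≠ j := by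
    rw [Function.Injective] at H
    push_neg at H
    obtain ⟨i, j, h1, h2⟩ := H
    exact ⟨i, j, h1, h2⟩
  exact
    Finset.sum_involution (fun σ _ => σ * Equiv.swap i j)
      (fun σ _ => by
        have : (∏ x, M (σ x) (p x)) = ∏ x, M ((σ * Equiv.swap i j) x) (p x) :=
          Fintype.prod_equiv (Equiv.swap i j) _ _ (by simp [Equiv.apply_swap_eq_self hpij])
        simp [this, Equiv.Perm.sign_swap hij, -Equiv.Perm.sign_swap', Finset.prod_mul_distrib])
      (fun σ _ _ => (not_congr Equiv.mul_swap_eq_iff).mpr hij) (fun _ _ => Finset.mem_univ _)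
      fun σ _ => Equiv.mul_swap_involutive i j σ

lemma det_mul_eq_sum_inj {s m : ℕ} (M : Matrix (Fin s) (Fin m) R) (N : Matrix (Fin m) (Fin s) R) :
    Matrix.det (M * N) =
      ∑ p ∈ Finset.univ.filter (fun p : Fin s → Fin m => Function.Injective p),
        ∑ σ : Equiv.Perm (Fin s), ε σ * ∏ x, M (σ x) (p x) * N (p x) x := by
  have h1 : Matrix.det (M * N)
      = ∑ p : Fin s → Fin m, ∑ σ : Equiv.Perm (Fin s), ε σ * ∏ x, M (σ x) (p x) * N (p x) x := by
    simp only [Matrix.det_apply', Matrix.mul_apply, Finset.prod_univ_sum, Finset.mul_sum,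
      Fintype.piFinset_univ]
    rw [Finset.sum_comm]
  rw [h1]
  refine (Finset.sum_subset (Finset.filter_subset _ _) fun f _ hbij => det_mul_aux' ?_).symm
  simpa only [true_and, Finset.mem_filter, Finset.mem_univ] using hbij

/-- Cauchy–Binet. -/
lemma det_mul_eq_sum_minors {s m : ℕ} (M : Matrix (Fin s) (Fin m) R) (N : Matrix (Fin m) (Fin s) R) :
    Matrix.det (M * N) = ∑ A : Finset (Fin m), if h : A.card = s then
      Matrix.det (M.submatrix id (A.orderEmbOfFin h)) *
        Matrix.det (N.submatrix (A.orderEmbOfFin h) id) else 0 := by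
  classical
  rw [det_mul_eq_sum_inj]
  rw [← Finset.sum_fiberwise_of_maps_to
    (g := fun p : Fin s → Fin m => Finset.image p Finset.univ) (t := Finset.univ)
    (fun x _ => Finset.mem_univ _)]
  refine Finset.sum_congr rfl fun A _ => ?_
  by_cases h : A.card = s
  · rw [dif_pos h]
    have key : ∀ p ∈ (Finset.univ.filter (fun p : Fin s → Fin m => Function.Injective p)).filter
        (fun p => Finset.image p Finset.univ = A), True := fun _ _ => trivial
    -- bijection with permutations
    rw [show Matrix.det (M.submatrix id (A.orderEmbOfFin h)) *
        Matrix.det (N.submatrix (A.orderEmbOfFin h) id)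
      = Matrix.det (M.submatrix id (A.orderEmbOfFin h) * N.submatrix (A.orderEmbOfFin h) id) from
        (Matrix.det_mul _ _).symm]
    rw [det_mul_eq_sum_inj]
    refine (Finset.sum_bij
      (i := fun (p : Fin s → Fin s) (_ : p ∈ Finset.univ.filter
        (fun p : Fin s → Fin s => Function.Injective p)) => (A.orderEmbOfFin h) ∘ p)
      ?_ ?_ ?_ ?_).symm
    · intro p hp
      simp only [Finset.mem_filter, Finset.mem_univ, true_and] at hp ⊢
      constructor
      · exact (A.orderEmbOfFin h).injective.comp hp
      · apply Finset.eq_of_subset_of_card_le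
        · intro x hx
          simp only [Finset.mem_image] at hx
          obtain ⟨y, _, rfl⟩ := hx
          exact Finset.orderEmbOfFin_mem A h _
        · rw [h, Finset.card_image_of_injective _ ((A.orderEmbOfFin h).injective.comp hp),
            Finset.card_univ, Fintype.card_fin]
    · intro p hp q hq hpq
      funext x
      exact (A.orderEmbOfFin h).injective (congrFun hpq x)
    · intro q hq
      simp only [Finset.mem_filter, Finset.mem_univ, true_and] at hq
      obtain ⟨hinj, himg⟩ := hq
      have hmem : ∀ x, q x ∈ A := by
        intro x
        rw [← himg]
        exact Finset.mem_image_of_mem _ (Finset.mem_univ x)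
      have hcard : Fintype.card {x // x ∈ A} = s := by
        rw [Fintype.card_coe, h]
      let qe : Fin s → {x // x ∈ A} := fun x => ⟨q x, hmem x⟩
      have hqe : Function.Injective qe := fun a b hab => hinj (congrArg Subtype.val hab)
      have hqeb : Function.Bijective qe := by
        rw [Fintype.bijective_iff_injective_and_card]
        exact ⟨hqe, by rw [hcard, Fintype.card_fin]⟩
      let fe : Fin s → {x // x ∈ A} := fun x => ⟨A.orderEmbOfFin h x, Finset.orderEmbOfFin_mem A h x⟩
      have hfe : Function.Injective fe := fun a b hab =>
        (A.orderEmbOfFin h).injective (congrArg Subtype.val hab)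
      have hfeb : Function.Bijective fe := by
        rw [Fintype.bijective_iff_injective_and_card]
        exact ⟨hfe, by rw [hcard, Fintype.card_fin]⟩
      refine ⟨(Equiv.ofBijective fe hfeb).symm ∘ qe, by
        simp only [Finset.mem_filter, Finset.mem_univ, true_and]
        exact ((Equiv.ofBijective fe hfeb).symm.injective.comp hqe), ?_⟩
      funext x
      have : fe ((Equiv.ofBijective fe hfeb).symm (qe x)) = qe x :=
        Equiv.ofBijective_apply_symm_apply fe hfeb _
      simpa [fe, qe] using congrArg Subtype.val this
    · intro p hp
      simp [Matrix.submatrix_apply, Function.comp]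
  · rw [dif_neg h]
    refine Finset.sum_eq_zero fun p hp => ?_
    exfalso
    simp only [Finset.mem_filter, Finset.mem_univ, true_and] at hp
    exact h (by rw [← hp.2, Finset.card_image_of_injective _ hp.1, Finset.card_univ,
      Fintype.card_fin])

end CauchyBinet

section Block

variable {R : Type*} [CommRing R]

/-- If all rows of `Q` outside `S` are basis vectors, `det Q` is the determinant of the
`S × S` block. -/
lemma det_eq_det_block {n : ℕ} (Q : Matrix (Fin n) (Fin n) R) (S : Finset (Fin n))
    (hQ : ∀ k, k ∉ S → Q k = Pi.single k 1) :
    Matrix.det Q =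
      Matrix.det (Q.submatrix (S.orderEmbOfFin rfl) (S.orderEmbOfFin rfl)) := by
  classical
  let e : {x // x ∈ S} ⊕ {x // x ∉ S} ≃ Fin n := Equiv.sumCompl (· ∈ S)
  rw [← Matrix.det_submatrix_equiv_self e Q]
  have hblock : Q.submatrix e e = Matrix.fromBlocks
      (Q.submatrix (fun x : {x // x ∈ S} => (x : Fin n)) (fun x : {x // x ∈ S} => (x : Fin n)))
      (Q.submatrix (fun x : {x // x ∈ S} => (x : Fin n)) (fun x : {x // x ∉ S} => (x : Fin n)))
      0 1 := by
    ext p q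
    cases p with
    | inl p =>
      cases q with
      | inl q => rfl
      | inr q => rfl
    | inr p =>
      cases q with
      | inl q =>
        simp only [Matrix.submatrix_apply, Matrix.fromBlocks_apply₂₁, Matrix.zero_apply]
        have := hQ p.1 p.2
        rw [show e (Sum.inr p) = p.1 from rfl, show e (Sum.inl q) = q.1 from rfl, this,
          Pi.single_apply, if_neg]
        intro hc
        exact p.2 (hc ▸ q.2)
      | inr q =>
        simp only [Matrix.submatrix_apply, Matrix.fromBlocks_apply₂₂, Matrix.one_apply]
        have := hQ p.1 p.2
        rw [show e (Sum.inr p) = p.1 from rfl, show e (Sum.inr q) = q.1 from rfl, this,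
          Pi.single_apply]
        simp only [Subtype.ext_iff, eq_comm]
  rw [hblock, Matrix.det_fromBlocks_zero₂₁, Matrix.det_one, mul_one]
  -- reindex the S×S block by `orderEmbOfFin`
  have hcard : Fintype.card {x // x ∈ S} = S.card := Fintype.card_coe S
  let g : Fin S.card → {x // x ∈ S} :=
    fun p => ⟨S.orderEmbOfFin rfl p, Finset.orderEmbOfFin_mem S rfl p⟩
  have hg : Function.Bijective g := by
    rw [Fintype.bijective_iff_injective_and_card]
    exact ⟨fun a b hab => (S.orderEmbOfFin rfl).injective (congrArg Subtype.val hab),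
      by rw [hcard, Fintype.card_fin]⟩
  rw [← Matrix.det_submatrix_equiv_self (Equiv.ofBijective g hg)]
  rfl

/-- Cofactor expansion when a row is a basis vector. -/
lemma det_row_single {t : ℕ} (C : Matrix (Fin (t+1)) (Fin (t+1)) R) (r c : Fin (t+1))
    (h : ∀ j, C r j = if j = c then 1 else 0) :
    Matrix.det C = (-1) ^ ((r : ℕ) + (c : ℕ)) *
      Matrix.det (C.submatrix r.succAbove c.succAbove) := by
  rw [Matrix.det_succ_row C r]
  rw [Finset.sum_eq_single c]
  · rw [h c, if_pos rfl, mul_one]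
  · intro j _ hj
    rw [h j, if_neg hj, mul_zero, zero_mul]
  · intro hc
    exact absurd (Finset.mem_univ c) hc

end Block

section OrdIdx

lemma exists_orderEmbOfFin_eq {N k : ℕ} {S : Finset (Fin N)} (h : S.card = k) {i : Fin N}
    (hi : i ∈ S) : ∃ p : Fin k, S.orderEmbOfFin h p = i := by
  have : (i : Fin N) ∈ Set.range (S.orderEmbOfFin h) := by
    rw [Finset.range_orderEmbOfFin]
    exact hi
  exact this

lemma ordIdx_eq_pos {N k : ℕ} {S : Finset (Fin N)} (h : S.card = k) {i : Fin N}
    (hi : i ∈ S) (pi : Fin k) (hpi : S.orderEmbOfFin h pi = i) :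
    ordIdx S i = (pi : ℕ) + 1 := by
  classical
  have h1 : ordIdx S i = (S.filter (fun x => x ≤ i)).card := by
    rw [ordIdx, Finset.insert_eq_self.mpr hi]
  rw [h1]
  have h2 : (S.filter (fun x => x ≤ i)).card = (Finset.Iic pi).card := by
    refine (Finset.card_bij (fun q _ => S.orderEmbOfFin h q) ?_ ?_ ?_).symm
    · intro q hq
      rw [Finset.mem_Iic] at hq
      rw [Finset.mem_filter]
      refine ⟨Finset.orderEmbOfFin_mem S h q, ?_⟩
      rw [← hpi]
      exact (S.orderEmbOfFin h).le_iff_le.mpr hq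
    · intro a _ b _ hab
      exact (S.orderEmbOfFin h).injective hab
    · intro x hx
      rw [Finset.mem_filter] at hx
      obtain ⟨q, hq⟩ := exists_orderEmbOfFin_eq h hx.1
      refine ⟨q, ?_, hq⟩
      rw [Finset.mem_Iic, ← (S.orderEmbOfFin h).le_iff_le, hq, hpi]
      exact hx.2
  rw [h2, Fin.card_Iic]

end OrdIdx

section DetX

lemma det_X {m n : ℕ} (F : Matrix (Fin m) (Fin n) ℝ) (α : Fin m) (i : Fin n)
    (S : Finset (Fin n)) (A : Finset (Fin m)) (hi : i ∈ S) (hα : α ∈ A)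
    (h : A.card = S.card) :
    Matrix.det (Matrix.of fun p q : Fin S.card =>
      if S.orderEmbOfFin rfl p = i then (if A.orderEmbOfFin h q = α then (1:ℝ) else 0)
      else F (A.orderEmbOfFin h q) (S.orderEmbOfFin rfl p))
    = (-1) ^ (ordIdx A α + ordIdx S i) * mminor F (A.erase α) (S.erase i) := by
  classical
  obtain ⟨t, ht⟩ : ∃ t, S.card = t + 1 :=
    ⟨S.card - 1, (Nat.succ_pred_eq_of_pos (Finset.card_pos.mpr ⟨i, hi⟩)).symm⟩
  set D : Matrix (Fin S.card) (Fin S.card) ℝ := Matrix.of fun p q : Fin S.card =>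
      if S.orderEmbOfFin rfl p = i then (if A.orderEmbOfFin h q = α then (1:ℝ) else 0)
      else F (A.orderEmbOfFin h q) (S.orderEmbOfFin rfl p) with hD
  set e : Fin (t+1) ≃ Fin S.card := finCongr ht.symm with he
  obtain ⟨pi, hpi⟩ := exists_orderEmbOfFin_eq (rfl : S.card = S.card) hi
  obtain ⟨qα, hqα⟩ := exists_orderEmbOfFin_eq h hα
  set r : Fin (t+1) := e.symm pi with hr
  set c : Fin (t+1) := e.symm qα with hc
  have her : e r = pi := e.apply_symm_apply pi
  have hec : e c = qα := e.apply_symm_apply qα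
  set C : Matrix (Fin (t+1)) (Fin (t+1)) ℝ := D.submatrix e e with hC
  have hdetC : Matrix.det D = Matrix.det C := (Matrix.det_submatrix_equiv_self e D).symm
  have hrow : ∀ j, C r j = if j = c then 1 else 0 := by
    intro j
    have h0 : C r j = if A.orderEmbOfFin h (e j) = α then (1:ℝ) else 0 := by
      rw [hC, Matrix.submatrix_apply, her, hD]
      simp only [Matrix.of_apply, hpi, eq_self_iff_true, if_true]
    rw [h0]
    by_cases hj : j = c
    · subst hj
      rw [if_pos (by rw [hec, hqα]), if_pos rfl]
    · rw [if_neg, if_neg hj]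
      intro hcontra
      apply hj
      have h1 : e j = qα := (A.orderEmbOfFin h).injective (by rw [hcontra, hqα])
      rw [hc, ← h1, Equiv.symm_apply_apply]
  have hcof := det_row_single C r c hrow
  have hScard : (S.erase i).card = t := by
    rw [Finset.card_erase_of_mem hi, ht]; omega
  have hAcard : (A.erase α).card = t := by
    rw [Finset.card_erase_of_mem hα, h, ht]; omega
  have h' : (A.erase α).card = (S.erase i).card := by rw [hScard, hAcard]
  set e2 : Fin t ≃ Fin (S.erase i).card := finCongr hScard.symm with he2
  have hval2 : ∀ x : Fin ((S.erase i).card), ((e2.symm x : Fin t) : ℕ) = (x : ℕ) := by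
    intro x; rw [he2]; simp
  have hKS : ∀ q : Fin ((S.erase i).card),
      (S.erase i).orderEmbOfFin rfl q = S.orderEmbOfFin rfl (e (r.succAbove (e2.symm q))) := by
    have hmono : StrictMono (fun q : Fin ((S.erase i).card) =>
        S.orderEmbOfFin rfl (e (r.succAbove (e2.symm q)))) := by
      intro a b hab
      apply (S.orderEmbOfFin rfl).strictMono
      rw [Fin.lt_def]
      simp only [he, finCongr_apply, Fin.coe_cast]
      exact Fin.strictMono_succAbove r
        (by rw [Fin.lt_def, hval2 a, hval2 b]; rwa [Fin.lt_def] at hab)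
    have hmem : ∀ q : Fin ((S.erase i).card),
        S.orderEmbOfFin rfl (e (r.succAbove (e2.symm q))) ∈ S.erase i := by
      intro q
      rw [Finset.mem_erase]
      refine ⟨?_, Finset.orderEmbOfFin_mem S rfl _⟩
      intro hcontra
      have h1 : e (r.succAbove (e2.symm q)) = pi :=
        (S.orderEmbOfFin rfl).injective (by rw [hcontra, hpi])
      have h2 : r.succAbove (e2.symm q) = r := e.injective (by rw [h1, her])
      exact Fin.succAbove_ne r (e2.symm q) h2
    exact fun q => (congrFun (Finset.orderEmbOfFin_unique rfl hmem hmono) q).symm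
  have hKA : ∀ q : Fin ((S.erase i).card),
      (A.erase α).orderEmbOfFin h' q = A.orderEmbOfFin h (e (c.succAbove (e2.symm q))) := by
    have hmono : StrictMono (fun q : Fin ((S.erase i).card) =>
        A.orderEmbOfFin h (e (c.succAbove (e2.symm q)))) := by
      intro a b hab
      apply (A.orderEmbOfFin h).strictMono
      rw [Fin.lt_def]
      simp only [he, finCongr_apply, Fin.coe_cast]
      exact Fin.strictMono_succAbove c
        (by rw [Fin.lt_def, hval2 a, hval2 b]; rwa [Fin.lt_def] at hab)
    have hmem : ∀ q : Fin ((S.erase i).card),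
        A.orderEmbOfFin h (e (c.succAbove (e2.symm q))) ∈ A.erase α := by
      intro q
      rw [Finset.mem_erase]
      refine ⟨?_, Finset.orderEmbOfFin_mem A h _⟩
      intro hcontra
      have h1 : e (c.succAbove (e2.symm q)) = qα :=
        (A.orderEmbOfFin h).injective (by rw [hcontra, hqα])
      have h2 : c.succAbove (e2.symm q) = c := e.injective (by rw [h1, hec])
      exact Fin.succAbove_ne c (e2.symm q) h2
    exact fun q => (congrFun (Finset.orderEmbOfFin_unique h' hmem hmono) q).symm
  have hminor : mminor F (A.erase α) (S.erase i)
      = Matrix.det (C.submatrix r.succAbove c.succAbove) := by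
    rw [mminor, dif_pos h']
    rw [← Matrix.det_transpose (C.submatrix r.succAbove c.succAbove)]
    rw [← Matrix.det_submatrix_equiv_self e2.symm]
    congr 1
    ext p q
    simp only [Matrix.submatrix_apply, Matrix.transpose_apply, Matrix.of_apply]
    rw [hKA p, hKS q]
    rw [hC, Matrix.submatrix_apply, hD]
    simp only [Matrix.of_apply]
    rw [if_neg]
    intro hcontra
    have h1 : e (r.succAbove (e2.symm q)) = pi :=
      (S.orderEmbOfFin rfl).injective (by rw [hcontra, hpi])
    have h2 : r.succAbove (e2.symm q) = r := e.injective (by rw [h1, her])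
    exact Fin.succAbove_ne r (e2.symm q) h2
  have hsr : ordIdx S i = (r : ℕ) + 1 := by
    rw [ordIdx_eq_pos rfl hi pi hpi, hr, he]
    simp
  have hsc : ordIdx A α = (c : ℕ) + 1 := by
    rw [ordIdx_eq_pos h hα qα hqα, hc, he]
    simp
  rw [hdetC, hcof, hminor, hsr, hsc]
  congr 1
  have h3 : (c : ℕ) + 1 + ((r : ℕ) + 1) = ((r : ℕ) + (c : ℕ)) + 2 := by ring
  rw [h3, pow_add, pow_add]
  norm_num
  rw [pow_add]

end DetX

section Main

lemma lhs_eq_det_updateRow {m n : ℕ} (F : Matrix (Fin m) (Fin n) ℝ) (α : Fin m) (i : Fin n) :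
    (1 + Fᵀ * F).det * ∑ j, ((1 : Matrix (Fin n) (Fin n) ℝ) + Fᵀ * F)⁻¹ i j * F α j
      = Matrix.det ((1 + Fᵀ * F).updateRow i (fun j => F α j)) := by
  classical
  set M : Matrix (Fin n) (Fin n) ℝ := 1 + Fᵀ * F with hM
  have hconj : Fᴴ = Fᵀ := Matrix.conjTranspose_eq_transpose_of_trivial F
  have hpsd : (Fᵀ * F).PosSemidef := hconj ▸ Matrix.posSemidef_conjTranspose_mul_self F
  have hpd : M.PosDef := Matrix.PosDef.add_posSemidef Matrix.PosDef.one hpsd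
  have hu : IsUnit M.det := hpd.det_pos.ne'.isUnit
  set v : Fin n → ℝ := fun j => F α j with hv
  have hsum : (∑ j, M⁻¹ i j * F α j) = (M⁻¹ *ᵥ v) i := rfl
  have h1 : M.det * (M⁻¹ *ᵥ v) i = (M.det • (M⁻¹ *ᵥ v)) i := by
    simp [smul_eq_mul]
  have h2 := congrFun (Matrix.det_smul_inv_mulVec_eq_cramer M v hu) i
  have hsymm : Mᵀ = M := by
    rw [hM, Matrix.transpose_add, Matrix.transpose_one, Matrix.transpose_mul,
      Matrix.transpose_transpose]
  calc M.det * ∑ j, M⁻¹ i j * F α j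
      = (M.det • (M⁻¹ *ᵥ v)) i := by rw [hsum, h1]
    _ = Matrix.cramer M v i := h2
    _ = (M.updateCol i v).det := Matrix.cramer_apply M v i
    _ = ((M.updateCol i v)ᵀ).det := (Matrix.det_transpose _).symm
    _ = (Mᵀ.updateRow i v).det := by rw [Matrix.updateRow_transpose]
    _ = (M.updateRow i v).det := by rw [hsymm]

/-- `ξ(F)·Σ_j ((I_n+FᵀF)⁻¹)_{ij} F_{αj} = Σ_{A,I : α∈A, i∈I} (−1)^{O_A(α)+O_I(i)}
[F]_{A,I}[F]_{A∖{α},I∖{i}}`. -/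
theorem xi_prime_eq_sum_of_minors (m n : ℕ) (F : Matrix (Fin m) (Fin n) ℝ)
    (α : Fin m) (i : Fin n) :
    (1 + Fᵀ * F).det * ∑ j, ((1 : Matrix (Fin n) (Fin n) ℝ) + Fᵀ * F)⁻¹ i j * F α j =
      ∑ A : Finset (Fin m), ∑ I : Finset (Fin n),
        if α ∈ A ∧ i ∈ I ∧ A.card = I.card then
          (-1 : ℝ) ^ (ordIdx A α + ordIdx I i) *
            mminor F A I * mminor F (A.erase α) (I.erase i)
        else 0 := by
  classical
  rw [lhs_eq_det_updateRow]
  rw [Finset.sum_comm]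
  set G : Matrix (Fin n) (Fin n) ℝ := Fᵀ * F with hG
  set v : Fin n → ℝ := fun j => F α j with hv
  set Hr : Fin n → Fin n → ℝ := fun k => if k = i then v else G k with hHr
  set E : Fin n → Fin n → ℝ := fun k => if k = i then 0 else Pi.single k 1 with hE
  have hP : Matrix.updateRow (1 + G) i v = Hr + E := by
    funext k j
    show Matrix.updateRow (1 + G) i v k j = Hr k j + E k j
    by_cases hk : k = i
    · subst hk
      rw [Matrix.updateRow_self]
      simp [hHr, hE]
    · rw [Matrix.updateRow_ne hk]
      simp only [hHr, hE, if_neg hk, Matrix.add_apply, Matrix.one_apply, Pi.single_apply]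
      rw [add_comm]
      congr 1
      by_cases hkj : k = j
      · subst hkj; simp
      · rw [if_neg hkj, if_neg (Ne.symm hkj)]
  have expand : Matrix.det (Matrix.updateRow (1 + G) i v)
      = ∑ S : Finset (Fin n), Matrix.detRowAlternating (S.piecewise Hr E) := by
    rw [hP]
    exact Matrix.detRowAlternating.toMultilinearMap.map_add_univ Hr E
  rw [expand]
  refine Finset.sum_congr rfl fun S _ => ?_
  by_cases hiS : i ∈ S
  · -- the S×S block
    have hQrows : ∀ k, k ∉ S → (S.piecewise Hr E) k = Pi.single k 1 := by
      intro k hk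
      rw [Finset.piecewise_eq_of_notMem _ _ _ hk]
      simp only [hE]
      rw [if_neg]
      intro hki
      exact hk (hki ▸ hiS)
    have hblock := det_eq_det_block (Matrix.of (S.piecewise Hr E)) S hQrows
    have hdet0 : Matrix.detRowAlternating (S.piecewise Hr E)
        = Matrix.det (Matrix.of (S.piecewise Hr E)) := rfl
    rw [hdet0, hblock]
    -- write the block as a product
    set X : Matrix (Fin S.card) (Fin m) ℝ := Matrix.of fun p a =>
      if S.orderEmbOfFin rfl p = i then (if a = α then (1:ℝ) else 0)
      else F a (S.orderEmbOfFin rfl p) with hX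
    set Y : Matrix (Fin m) (Fin S.card) ℝ := Matrix.of fun a q =>
      F a (S.orderEmbOfFin rfl q) with hY
    have hprod : (Matrix.of (S.piecewise Hr E)).submatrix
        (S.orderEmbOfFin rfl) (S.orderEmbOfFin rfl) = X * Y := by
      ext p q
      rw [Matrix.mul_apply, Matrix.submatrix_apply]
      have hpS : (S.orderEmbOfFin rfl p : Fin n) ∈ S := Finset.orderEmbOfFin_mem S rfl p
      rw [show (Matrix.of (S.piecewise Hr E)) (S.orderEmbOfFin rfl p) = S.piecewise Hr E
        (S.orderEmbOfFin rfl p) from rfl, Finset.piecewise_eq_of_mem _ _ _ hpS]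
      simp only [hHr]
      by_cases hpi : (S.orderEmbOfFin rfl p : Fin n) = i
      · rw [if_pos hpi]
        simp only [hX, hY, Matrix.of_apply, if_pos hpi, hv]
        rw [Finset.sum_congr rfl (fun a _ => by rw [ite_mul, one_mul, zero_mul]),
          Finset.sum_ite_eq' Finset.univ α (fun a => F a (S.orderEmbOfFin rfl q))]
        simp
      · rw [if_neg hpi]
        simp only [hX, hY, Matrix.of_apply, if_neg hpi, hG, Matrix.mul_apply,
          Matrix.transpose_apply]
    rw [hprod, det_mul_eq_sum_minors]
    refine Finset.sum_congr rfl fun A _ => ?_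
    by_cases hcard : A.card = S.card
    · rw [dif_pos hcard]
      by_cases hαA : α ∈ A
      · rw [if_pos ⟨hαA, hiS, hcard⟩]
        have hXdet : Matrix.det (X.submatrix id (A.orderEmbOfFin hcard))
            = (-1) ^ (ordIdx A α + ordIdx S i) * mminor F (A.erase α) (S.erase i) := by
          rw [← det_X F α i S A hiS hαA hcard]
          congr 1
        have hYdet : Matrix.det (Y.submatrix (A.orderEmbOfFin hcard) id)
            = mminor F A S := by
          rw [mminor, dif_pos hcard]
          congr 1
        rw [hXdet, hYdet]
        ring
      · rw [if_neg (fun hcon => hαA hcon.1)]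
        have : Matrix.det (X.submatrix id (A.orderEmbOfFin hcard)) = 0 := by
          obtain ⟨pi, hpi⟩ := exists_orderEmbOfFin_eq (rfl : S.card = S.card) hiS
          refine Matrix.det_eq_zero_of_row_eq_zero pi fun q => ?_
          simp only [Matrix.submatrix_apply, hX, Matrix.of_apply, id, hpi,
            eq_self_iff_true, if_true]
          rw [if_neg]
          intro hcon
          exact hαA (hcon ▸ Finset.orderEmbOfFin_mem A hcard q)
        rw [this, zero_mul]
    · rw [dif_neg hcard, if_neg (fun hcon => hcard hcon.2.2)]
  · -- row i vanishes
    have hzero : (S.piecewise Hr E) i = 0 := by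
      rw [Finset.piecewise_eq_of_notMem _ _ _ hiS]
      simp only [hE, if_true, eq_self_iff_true]
    have hz : Matrix.detRowAlternating (S.piecewise Hr E) = 0 :=
      Matrix.detRowAlternating.toMultilinearMap.map_coord_zero i hzero
    rw [hz]
    exact (Finset.sum_eq_zero fun A _ => by
      rw [if_neg (fun hcon => hiS hcon.2.1)]).symm

end Main
end

section
/- Let F be an m×n real matrix and ξ(F) = det(I_n + FᵀF). Then for all 1 ≤ i,j ≤ n, ξ(F) ((I_n + FᵀF)⁻¹)_{ij} = (1 + Σ_{A,I} ([F]_{A,I})²) δ_{ij} − Σ_{A,I : j ∈ I, i ∉ I∖{j}} (−1)^{O_I(j)+O_{I∖{j}}(i)} [F]_{A,(I∖{j})∪{i}} [F]_{A,I}, where both sums range over all A ⊆ {1,…,m} and I ⊆ {1,…,n} with |A| = |I| ≥ 1. -/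
open Matrix

section Aux

open Finset Equiv

variable {R : Type*} [CommRing R]

/-- every element of K is hit by the order embedding -/
lemma exists_orderEmb_pos {n t : ℕ} (K : Finset (Fin n)) (h : K.card = t) {x : Fin n}
    (hx : x ∈ K) : ∃ p : Fin t, K.orderEmbOfFin h p = x := by
  have : x ∈ Set.range (K.orderEmbOfFin h) := by
    rw [Finset.range_orderEmbOfFin]; exact hx
  exact this

/-- the index of x in K equals the number of smaller elements of K -/
lemma orderEmb_pos_eq {n t : ℕ} (K : Finset (Fin n)) (h : K.card = t) (p : Fin t) :
    (p : ℕ) = (K.filter (fun y => y < K.orderEmbOfFin h p)).card := by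
  have himg : K.filter (fun y => y < K.orderEmbOfFin h p)
      = (Finset.Iio p).image (K.orderEmbOfFin h) := by
    ext y
    simp only [Finset.mem_filter, Finset.mem_image, Finset.mem_Iio]
    constructor
    · rintro ⟨hyK, hylt⟩
      obtain ⟨q, rfl⟩ := exists_orderEmb_pos K h hyK
      exact ⟨q, (K.orderEmbOfFin h).strictMono.lt_iff_lt.mp hylt, rfl⟩
    · rintro ⟨q, hq, rfl⟩
      exact ⟨Finset.orderEmbOfFin_mem K h q, (K.orderEmbOfFin h).strictMono hq⟩
  rw [himg, Finset.card_image_of_injective _ (K.orderEmbOfFin h).injective, Fin.card_Iio]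

lemma orderEmbOfFin_congr {n k : ℕ} {s t : Finset (Fin n)} (h : s = t) (hs : s.card = k)
    (ht : t.card = k) : s.orderEmbOfFin hs = t.orderEmbOfFin ht := by
  subst h; rfl

/-- composing with succAbove gives the order embedding of the erased set -/
lemma orderEmb_erase {n t : ℕ} (K : Finset (Fin n)) (h : K.card = t + 1) (p : Fin (t+1))
    (h' : (K.erase (K.orderEmbOfFin h p)).card = t) :
    (K.orderEmbOfFin h) ∘ (p.succAbove) = (K.erase (K.orderEmbOfFin h p)).orderEmbOfFin h' := by
  apply Finset.orderEmbOfFin_unique h'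
  · intro q
    simp only [Function.comp_apply, Finset.mem_erase]
    exact ⟨fun hc => (Fin.succAbove_ne p q) ((K.orderEmbOfFin h).injective hc),
      Finset.orderEmbOfFin_mem _ _ _⟩
  · exact (K.orderEmbOfFin h).strictMono.comp (Fin.strictMono_succAbove p)

/-- if all rows outside K are unit rows, det reduces to the K×K submatrix -/
lemma det_eq_det_submatrix_of_unit_rows {n t : ℕ} (N : Matrix (Fin n) (Fin n) R)
    (K : Finset (Fin n)) (h : K.card = t)
    (hN : ∀ k, k ∉ K → N k = Pi.single k 1) :
    N.det = (N.submatrix (K.orderEmbOfFin h) (K.orderEmbOfFin h)).det := by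
  classical
  rw [Matrix.twoBlockTriangular_det N (fun k => k ∈ K) (by
    intro a ha b hb
    have := hN a ha
    rw [this, Pi.single_apply, if_neg]
    rintro rfl; exact ha hb)]
  have h2 : (Matrix.toSquareBlockProp N fun i => ¬ i ∈ K) = 1 := by
    ext a b
    show N a.1 b.1 = (1 : Matrix _ _ R) a b
    rw [hN a.1 a.2, Pi.single_apply, Matrix.one_apply]
    by_cases hab : a = b
    · subst hab; simp
    · rw [if_neg hab, if_neg (by simpa [Subtype.ext_iff, eq_comm] using hab)]
  rw [h2, Matrix.det_one, mul_one]
  let e : Fin t ≃ {a : Fin n // a ∈ K} := (K.orderIsoOfFin h).toEquiv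
  have h3 : N.submatrix (K.orderEmbOfFin h) (K.orderEmbOfFin h)
      = (Matrix.toSquareBlockProp N fun k => k ∈ K).submatrix e e := by ext p q; rfl
  rw [h3, Matrix.det_submatrix_equiv_self]
  congr!

/-- cofactor expansion along a unit row -/
lemma det_of_unit_row {t : ℕ} (A : Matrix (Fin (t+1)) (Fin (t+1)) R) (r c : Fin (t+1))
    (h : ∀ q, A r q = if q = c then 1 else 0) :
    A.det = (-1 : R) ^ ((r : ℕ) + (c : ℕ)) * (A.submatrix r.succAbove c.succAbove).det := by
  rw [Matrix.det_succ_row A r]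
  rw [Finset.sum_eq_single c]
  · rw [h c, if_pos rfl, mul_one]
  · intro q _ hq
    rw [h q, if_neg hq]
    ring
  · simp

/-- Cauchy–Binet -/
lemma cauchy_binet_s5 {m k : ℕ} (P Q : Matrix (Fin m) (Fin k) R) :
    (Pᵀ * Q).det = ∑ A : Finset (Fin m), if h : A.card = k then
      (P.submatrix (A.orderEmbOfFin h) id).det * (Q.submatrix (A.orderEmbOfFin h) id).det
    else 0 := by
  classical
  have h1 : (Pᵀ * Q).det
      = ∑ r : Fin k → Fin m, (∏ a, P (r a) a) * (Q.submatrix r id).det := by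
    have hrow : (Pᵀ * Q) = Matrix.of fun a => ∑ s : Fin m, P s a • (Q s) := by
      ext a b
      simp [Matrix.mul_apply, Finset.sum_apply]
    rw [hrow]
    have : (Matrix.of fun a => ∑ s : Fin m, P s a • (Q s)).det
        = (Matrix.detRowAlternating :
            (Fin k → R) [⋀^Fin k]→ₗ[R] R).toMultilinearMap
            (fun a => ∑ s : Fin m, P s a • (Q s)) := rfl
    rw [this, MultilinearMap.map_sum]
    refine Finset.sum_congr rfl fun r _ => ?_
    rw [MultilinearMap.map_smul_univ]
    rfl
  rw [h1]
  rw [← Finset.sum_filter_of_ne (p := fun r : Fin k → Fin m => Function.Injective r)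
    (fun r _ hne => by
      by_contra hni
      apply hne
      obtain ⟨a, b, hab, hne'⟩ := Function.not_injective_iff.mp hni
      rw [Matrix.det_zero_of_row_eq hne' (by ext c; simp [hab]), mul_zero])]
  rw [← Finset.sum_fiberwise_of_maps_to (g := fun r : Fin k → Fin m => Finset.image r Finset.univ)
    (fun r _ => Finset.mem_univ _)]
  refine Finset.sum_congr rfl fun A _ => ?_
  by_cases hA : A.card = k
  · rw [dif_pos hA]
    rw [Matrix.det_apply' (P.submatrix (A.orderEmbOfFin hA) id), Finset.sum_mul]
    refine (Finset.sum_bij (fun (σ : Perm (Fin k)) _ => (A.orderEmbOfFin hA) ∘ σ) ?_ ?_ ?_ ?_).symm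
    · intro σ _
      simp only [Finset.mem_filter, Finset.mem_univ, true_and]
      constructor
      · exact ((A.orderEmbOfFin hA).injective.comp σ.injective)
      · ext x
        simp only [Finset.mem_image, Finset.mem_univ, true_and, Function.comp_apply]
        constructor
        · rintro ⟨a, rfl⟩; exact Finset.orderEmbOfFin_mem _ _ _
        · intro hx
          obtain ⟨p, hp⟩ := exists_orderEmb_pos A hA hx
          exact ⟨σ.symm p, by simp [hp]⟩
    · intro σ _ τ _ hst
      apply Equiv.ext
      intro a
      exact (A.orderEmbOfFin hA).injective (congrFun hst a)
    · intro r hr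
      simp only [Finset.mem_filter, Finset.mem_univ, true_and] at hr
      obtain ⟨hinj, himg⟩ := hr
      have hmem : ∀ a, r a ∈ A := fun a => by
        rw [← himg]; exact Finset.mem_image_of_mem r (Finset.mem_univ a)
      have key : ∀ a, (A.orderEmbOfFin hA) ((A.orderIsoOfFin hA).symm ⟨r a, hmem a⟩) = r a :=
        fun a => by rw [← Finset.coe_orderIsoOfFin_apply, OrderIso.apply_symm_apply]
      have hginj : Function.Injective
          (fun a => (A.orderIsoOfFin hA).symm ⟨r a, hmem a⟩ : Fin k → Fin k) := by
        intro a b hab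
        apply hinj
        rw [← key a, ← key b]
        exact congrArg _ hab
      refine ⟨Equiv.ofBijective _ (Finite.injective_iff_bijective.mp hginj),
        Finset.mem_univ _, ?_⟩
      funext a
      show (A.orderEmbOfFin hA) ((A.orderIsoOfFin hA).symm ⟨r a, hmem a⟩) = r a
      exact key a
    · intro σ _
      have hsub : Q.submatrix ((A.orderEmbOfFin hA) ∘ σ) id
          = (Q.submatrix (A.orderEmbOfFin hA) id).submatrix σ id := by
        ext p q; rfl
      rw [hsub, Matrix.det_permute]
      simp only [Matrix.submatrix_apply, Function.comp_apply, id_eq]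
      ring
  · rw [dif_neg hA]
    apply Finset.sum_eq_zero
    intro r hr
    simp only [Finset.mem_filter, Finset.mem_univ, true_and] at hr
    exfalso
    exact hA (by rw [← hr.2, Finset.card_image_of_injective _ hr.1, Finset.card_univ,
      Fintype.card_fin])

lemma ordIdx_mem {N : ℕ} {A : Finset (Fin N)} {a : Fin N} (h : a ∈ A) :
    ordIdx A a = (A.filter (fun x => x < a)).card + 1 := by
  unfold ordIdx
  rw [Finset.insert_eq_self.mpr h]
  have : A.filter (fun x => x ≤ a) = insert a (A.filter (fun x => x < a)) := by
    ext x
    simp only [Finset.mem_filter, Finset.mem_insert]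
    constructor
    · rintro ⟨hx, hle⟩
      rcases lt_or_eq_of_le hle with h' | h'
      · exact Or.inr ⟨hx, h'⟩
      · exact Or.inl h'
    · rintro (rfl | ⟨hx, hlt⟩)
      · exact ⟨h, le_refl _⟩
      · exact ⟨hx, le_of_lt hlt⟩
  rw [this, Finset.card_insert_of_notMem (by simp)]

/-- the key sign computation -/
lemma sign_key {n : ℕ} (S : Finset (Fin n)) (i j : Fin n) (hij : i ≠ j)
    (hiS : i ∈ S) (hjS : j ∉ S) (pj pi : ℕ)
    (hpj : pj = ((insert j S).filter (fun y => y < j)).card)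
    (hpi : pi = ((insert j S).filter (fun y => y < i)).card) :
    ((-1 : ℝ)) ^ (pj + pi)
      = -(-1) ^ (ordIdx (insert j (S.erase i)) j + ordIdx ((insert j (S.erase i)).erase j) i) := by
  have hjSe : j ∉ S.erase i := fun h => hjS (Finset.mem_of_mem_erase h)
  have hiI : i ∉ S.erase i := Finset.notMem_erase _ _
  set a' := ((S.erase i).filter (fun y => y < j)).card with ha'
  set β := (S.filter (fun y => y < i)).card with hβ
  have h1 : ordIdx (insert j (S.erase i)) j = a' + 1 := by
    rw [ordIdx_mem (Finset.mem_insert_self _ _)]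
    congr 1
    rw [Finset.filter_insert, if_neg (lt_irrefl j)]
  have h2 : ((insert j (S.erase i)).erase j) = S.erase i := Finset.erase_insert hjSe
  have h3 : ordIdx (S.erase i) i = β + 1 := by
    unfold ordIdx
    rw [Finset.insert_erase hiS]
    have : S.filter (fun x => x ≤ i) = insert i (S.filter (fun x => x < i)) := by
      ext x
      simp only [Finset.mem_filter, Finset.mem_insert]
      constructor
      · rintro ⟨hx, hle⟩
        rcases lt_or_eq_of_le hle with h' | h'
        · exact Or.inr ⟨hx, h'⟩
        · exact Or.inl h'
      · rintro (rfl | ⟨hx, hlt⟩)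
        · exact ⟨hiS, le_refl _⟩
        · exact ⟨hx, le_of_lt hlt⟩
    rw [this, Finset.card_insert_of_notMem (by simp)]
  have h4 : pj = (S.filter (fun y => y < j)).card := by
    rw [hpj, Finset.filter_insert, if_neg (lt_irrefl j)]
  have h5 : (S.filter (fun y => y < j)).card = a' + (if i < j then 1 else 0) := by
    conv_lhs => rw [← Finset.insert_erase hiS]
    rw [Finset.filter_insert]
    split_ifs with h
    · rw [Finset.card_insert_of_notMem (by simp)]
    · rfl
  have h6 : pi = β + (if j < i then 1 else 0) := by
    rw [hpi, Finset.filter_insert]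
    split_ifs with h
    · rw [Finset.card_insert_of_notMem (by simp [hjS]), hβ]
    · rfl
  rw [h1, h2, h3, h4, h5, h6]
  rcases lt_or_gt_of_ne hij with h | h
  · rw [if_pos h, if_neg (not_lt_of_gt h)]
    rw [show a' + 1 + (β + 0) = a' + β + 1 by ring, show a' + 1 + (β + 1) = a' + β + 2 by ring,
      pow_add, pow_add, pow_succ, pow_succ, pow_succ]
    ring
  · rw [if_neg (not_lt_of_gt h), if_pos h]
    rw [show a' + 0 + (β + 1) = a' + β + 1 by ring, show a' + 1 + (β + 1) = a' + β + 2 by ring,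
      pow_add, pow_add, pow_succ, pow_succ, pow_succ]
    ring

end Aux

section Main

open Finset

lemma mminor_eq_det {m n : ℕ} (F : Matrix (Fin m) (Fin n) ℝ) (A : Finset (Fin m))
    (I : Finset (Fin n)) {t : ℕ} (hA : A.card = t) (hI : I.card = t) :
    mminor F A I = (F.submatrix (A.orderEmbOfFin hA) (I.orderEmbOfFin hI)).det := by
  subst hI
  rw [mminor, dif_pos hA]
  rfl

lemma mminor_empty {m n : ℕ} (F : Matrix (Fin m) (Fin n) ℝ) : mminor F ∅ ∅ = 1 := by
  rw [mminor_eq_det F ∅ ∅ (Finset.card_empty) (Finset.card_empty)]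
  exact Matrix.det_fin_zero

lemma mminor_mul {m n : ℕ} (F : Matrix (Fin m) (Fin n) ℝ) (J I : Finset (Fin n)) :
    mminor (Fᵀ * F) J I = ∑ A : Finset (Fin m),
      if A.card = I.card then mminor F A J * mminor F A I else 0 := by
  classical
  by_cases hJI : J.card = I.card
  · rw [mminor_eq_det _ J I hJI rfl]
    have hfact : (Fᵀ * F).submatrix (J.orderEmbOfFin hJI) (I.orderEmbOfFin rfl)
        = (F.submatrix id (J.orderEmbOfFin hJI))ᵀ * (F.submatrix id (I.orderEmbOfFin rfl)) := by
      ext p q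
      simp [Matrix.mul_apply]
    rw [hfact, cauchy_binet_s5]
    refine Finset.sum_congr rfl fun A _ => ?_
    by_cases hA : A.card = I.card
    · rw [dif_pos hA, if_pos hA, mminor_eq_det F A J hA hJI, mminor_eq_det F A I hA rfl]
      congr 1
    · rw [dif_neg hA, if_neg hA]
  · rw [mminor, dif_neg hJI]
    symm
    apply Finset.sum_eq_zero
    intro A _
    split_ifs with h
    · rw [mminor, dif_neg (fun hc : A.card = J.card => hJI (hc ▸ h)), zero_mul]
    · rfl

lemma keystep {n : ℕ} (G : Matrix (Fin n) (Fin n) ℝ) (i j : Fin n) (hij : i ≠ j)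
    (S : Finset (Fin n)) (hiS : i ∈ S) (hjS : j ∉ S) :
    (Matrix.of (S.piecewise (fun k => if k = j then 0 else G k)
        (fun k => if k = j then Pi.single i 1 else Pi.single k 1))).det
      = -((-1:ℝ) ^ (ordIdx (insert j (S.erase i)) j + ordIdx ((insert j (S.erase i)).erase j) i)
          * mminor G S (insert j (S.erase i))) := by
  classical
  have hjSe : j ∉ S.erase i := fun h => hjS (Finset.mem_of_mem_erase h)
  set X : Matrix (Fin n) (Fin n) ℝ := Matrix.of (S.piecewise (fun k => if k = j then 0 else G k)
      (fun k => if k = j then Pi.single i 1 else Pi.single k 1)) with hX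
  have hXapp : ∀ k, X k = S.piecewise (fun k => if k = j then (0 : Fin n → ℝ) else G k)
      (fun k => if k = j then Pi.single i 1 else Pi.single k 1) k := fun k => rfl
  have hK : (insert j S).card = S.card + 1 := Finset.card_insert_of_notMem hjS
  obtain ⟨pj, hpj⟩ := exists_orderEmb_pos (insert j S) hK (Finset.mem_insert_self j S)
  obtain ⟨pi, hpi⟩ := exists_orderEmb_pos (insert j S) hK (Finset.mem_insert_of_mem hiS)
  have hunit : ∀ k, k ∉ insert j S → X k = Pi.single k 1 := by
    intro k hk
    have hkj : k ≠ j := fun h => hk (h ▸ Finset.mem_insert_self j S)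
    have hkS : k ∉ S := fun h => hk (Finset.mem_insert_of_mem h)
    rw [hXapp k, Finset.piecewise_eq_of_notMem _ _ _ hkS, if_neg hkj]
  rw [det_eq_det_submatrix_of_unit_rows X (insert j S) hK hunit]
  have hrow : ∀ q, (X.submatrix ((insert j S).orderEmbOfFin hK) ((insert j S).orderEmbOfFin hK))
      pj q = if q = pi then 1 else 0 := by
    intro q
    show X ((insert j S).orderEmbOfFin hK pj) ((insert j S).orderEmbOfFin hK q) = _
    rw [hpj]
    rw [congrFun (hXapp j) _, Finset.piecewise_eq_of_notMem _ _ _ hjS]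
    rw [if_pos rfl]
    rw [Pi.single_apply]
    congr 1
    rw [← hpi]
    exact propext ⟨fun h => ((insert j S).orderEmbOfFin hK).injective h, fun h => h ▸ rfl⟩
  rw [det_of_unit_row _ pj pi hrow, Matrix.submatrix_submatrix]
  -- identify the two composed embeddings
  have e1 : (insert j S).erase ((insert j S).orderEmbOfFin hK pj) = S := by
    rw [hpj]; exact Finset.erase_insert hjS
  have h1' : ((insert j S).erase ((insert j S).orderEmbOfFin hK pj)).card = S.card := by
    rw [e1]
  have e2 : (insert j S).erase ((insert j S).orderEmbOfFin hK pi) = insert j (S.erase i) := by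
    rw [hpi]; exact Finset.erase_insert_of_ne (fun h => hij h.symm)
  have hC : (insert j (S.erase i)).card = S.card := by
    rw [Finset.card_insert_of_notMem hjSe, Finset.card_erase_add_one hiS]
  have h2' : ((insert j S).erase ((insert j S).orderEmbOfFin hK pi)).card = S.card := by
    rw [e2]; exact hC
  have emb1 : ((insert j S).orderEmbOfFin hK) ∘ pj.succAbove
      = (S.orderEmbOfFin rfl : Fin S.card ↪o Fin n) := by
    rw [orderEmb_erase (insert j S) hK pj h1', orderEmbOfFin_congr e1 h1' rfl]
  have emb2 : ((insert j S).orderEmbOfFin hK) ∘ pi.succAbove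
      = ((insert j (S.erase i)).orderEmbOfFin hC : Fin S.card ↪o Fin n) := by
    rw [orderEmb_erase (insert j S) hK pi h2', orderEmbOfFin_congr e2 h2' hC]
  rw [emb1, emb2]
  have hGsub : X.submatrix (S.orderEmbOfFin rfl) ((insert j (S.erase i)).orderEmbOfFin hC)
      = G.submatrix (S.orderEmbOfFin rfl) ((insert j (S.erase i)).orderEmbOfFin hC) := by
    ext p q
    have hpS : S.orderEmbOfFin rfl p ∈ S := Finset.orderEmbOfFin_mem _ _ _
    show X _ _ = _
    rw [congrFun (hXapp _) _, Finset.piecewise_eq_of_mem _ _ _ hpS,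
      if_neg (fun h => hjS (by rw [← h]; exact hpS))]
    rfl
  rw [hGsub, ← mminor_eq_det G S (insert j (S.erase i)) rfl hC]
  rw [sign_key S i j hij hiS hjS (pj : ℕ) (pi : ℕ)
    ((orderEmb_pos_eq (insert j S) hK pj).trans (by rw [hpj]))
    ((orderEmb_pos_eq (insert j S) hK pi).trans (by rw [hpi]))]
  ring

end Main

section MainComb

open Finset

lemma mainComb {n : ℕ} (G : Matrix (Fin n) (Fin n) ℝ) (i j : Fin n) :
    (1 + G).adjugate i j
      = (∑ I : Finset (Fin n), mminor G I I) * (if i = j then 1 else 0)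
        - ∑ I : Finset (Fin n), if j ∈ I ∧ i ∉ I.erase j then
            (-1:ℝ) ^ (ordIdx I j + ordIdx (I.erase j) i) * mminor G (insert i (I.erase j)) I
          else 0 := by
  classical
  set b : Fin n → (Fin n → ℝ) := fun k => if k = j then 0 else G k with hb
  set a : Fin n → (Fin n → ℝ) := fun k => if k = j then Pi.single i 1 else Pi.single k 1 with ha
  have hM : (1 + G).updateRow j (Pi.single i 1) = Matrix.of (b + a) := by
    ext k l
    simp only [Matrix.of_apply, Pi.add_apply]
    by_cases hk : k = j
    · subst hk
      rw [Matrix.updateRow_self]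
      simp [hb, ha]
    · rw [Matrix.updateRow_ne hk]
      simp only [hb, ha, if_neg hk]
      rw [Matrix.add_apply, Matrix.one_apply, Pi.single_apply, add_comm]
      congr 1
      simp [eq_comm]
  rw [Matrix.adjugate_apply, hM]
  have hdet : (Matrix.of (b + a)).det
      = ∑ S : Finset (Fin n), (Matrix.of (S.piecewise b a)).det := by
    exact (Matrix.detRowAlternating :
      (Fin n → ℝ) [⋀^Fin n]→ₗ[ℝ] ℝ).toMultilinearMap.map_add_univ b a
  rw [hdet]
  by_cases hij : i = j
  · -- diagonal case
    subst hij
    rw [if_pos rfl, mul_one]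
    have hL : ∀ S : Finset (Fin n), (Matrix.of (S.piecewise b a)).det
        = if i ∈ S then 0 else mminor G S S := by
      intro S
      by_cases hiS : i ∈ S
      · rw [if_pos hiS]
        apply Matrix.det_eq_zero_of_row_eq_zero i
        intro l
        show S.piecewise b a i l = 0
        rw [Finset.piecewise_eq_of_mem _ _ _ hiS, hb]
        simp
      · rw [if_neg hiS]
        have hunit : ∀ k, k ∉ S → (Matrix.of (S.piecewise b a)) k = Pi.single k 1 := by
          intro k hk
          show S.piecewise b a k = _
          rw [Finset.piecewise_eq_of_notMem _ _ _ hk, ha]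
          by_cases hkj : k = i
          · subst hkj; simp
          · simp [hkj]
        rw [det_eq_det_submatrix_of_unit_rows _ S rfl hunit,
          mminor_eq_det G S S rfl rfl]
        congr 1
        ext p q
        have hpS : S.orderEmbOfFin rfl p ∈ S := Finset.orderEmbOfFin_mem _ _ _
        show S.piecewise b a _ _ = _
        rw [Finset.piecewise_eq_of_mem _ _ _ hpS, hb]
        simp only [if_neg (fun h : S.orderEmbOfFin rfl p = i => hiS (h ▸ hpS))]
        rfl
    have hR : ∀ I : Finset (Fin n), (if i ∈ I ∧ i ∉ I.erase i then
        (-1:ℝ) ^ (ordIdx I i + ordIdx (I.erase i) i) * mminor G (insert i (I.erase i)) I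
        else 0) = if i ∈ I then mminor G I I else 0 := by
      intro I
      by_cases hiI : i ∈ I
      · rw [if_pos ⟨hiI, Finset.notMem_erase _ _⟩, if_pos hiI, Finset.insert_erase hiI]
        have hord : ordIdx (I.erase i) i = ordIdx I i := by
          unfold ordIdx
          rw [Finset.insert_erase hiI, Finset.insert_eq_self.mpr hiI]
        rw [hord]
        have : Even (ordIdx I i + ordIdx I i) := ⟨ordIdx I i, rfl⟩
        rw [this.neg_one_pow, one_mul]
      · rw [if_neg (fun h => hiI h.1), if_neg hiI]
    calc ∑ S : Finset (Fin n), (Matrix.of (S.piecewise b a)).det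
        = ∑ S : Finset (Fin n), if i ∈ S then 0 else mminor G S S :=
          Finset.sum_congr rfl fun S _ => hL S
      _ = ∑ I : Finset (Fin n), (mminor G I I - if i ∈ I then mminor G I I else 0) := by
          refine Finset.sum_congr rfl fun S _ => ?_
          by_cases hiS : i ∈ S
          · rw [if_pos hiS, if_pos hiS, sub_self]
          · rw [if_neg hiS, if_neg hiS, sub_zero]
      _ = _ := by
          rw [Finset.sum_sub_distrib]
          congr 1
          exact (Finset.sum_congr rfl fun I _ => (hR I).symm)
  · -- off-diagonal case
    rw [if_neg hij, mul_zero, zero_sub]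
    have hL : ∀ S : Finset (Fin n), (Matrix.of (S.piecewise b a)).det
        = if i ∈ S ∧ j ∉ S then
            -((-1:ℝ) ^ (ordIdx (insert j (S.erase i)) j
                + ordIdx ((insert j (S.erase i)).erase j) i)
              * mminor G S (insert j (S.erase i)))
          else 0 := by
      intro S
      by_cases hjS : j ∈ S
      · rw [if_neg (fun h => h.2 hjS)]
        apply Matrix.det_eq_zero_of_row_eq_zero j
        intro l
        show S.piecewise b a j l = 0
        rw [Finset.piecewise_eq_of_mem _ _ _ hjS, hb]
        simp
      · by_cases hiS : i ∈ S
        · rw [if_pos ⟨hiS, hjS⟩]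
          exact keystep G i j hij S hiS hjS
        · rw [if_neg (fun h => hiS h.1)]
          apply Matrix.det_zero_of_row_eq hij
          show S.piecewise b a i = S.piecewise b a j
          rw [Finset.piecewise_eq_of_notMem _ _ _ hiS,
            Finset.piecewise_eq_of_notMem _ _ _ hjS, ha]
          simp [hij]
    rw [Finset.sum_congr rfl fun S _ => hL S]
    have hneg : ∀ S : Finset (Fin n), (if i ∈ S ∧ j ∉ S then
        -((-1:ℝ) ^ (ordIdx (insert j (S.erase i)) j
            + ordIdx ((insert j (S.erase i)).erase j) i)
          * mminor G S (insert j (S.erase i)))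
        else 0)
        = -(if i ∈ S ∧ j ∉ S then
            ((-1:ℝ) ^ (ordIdx (insert j (S.erase i)) j
                + ordIdx ((insert j (S.erase i)).erase j) i)
              * mminor G S (insert j (S.erase i)))
          else 0) := by
      intro S
      split_ifs <;> simp
    rw [Finset.sum_congr rfl fun S _ => hneg S, Finset.sum_neg_distrib, neg_inj,
      ← Finset.sum_filter, ← Finset.sum_filter]
    refine Finset.sum_bij' (fun S _ => insert j (S.erase i)) (fun I _ => insert i (I.erase j))
      ?_ ?_ ?_ ?_ ?_
    · intro S hS
      simp only [Finset.mem_filter, Finset.mem_univ, true_and] at hS ⊢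
      refine ⟨Finset.mem_insert_self _ _, ?_⟩
      rw [Finset.erase_insert (fun h => hS.2 (Finset.mem_of_mem_erase h))]
      exact Finset.notMem_erase _ _
    · intro I hI
      simp only [Finset.mem_filter, Finset.mem_univ, true_and] at hI ⊢
      refine ⟨Finset.mem_insert_self _ _, fun h => ?_⟩
      rcases Finset.mem_insert.mp h with h | h
      · exact hij h.symm
      · exact (Finset.notMem_erase _ _) h
    · intro S hS
      simp only [Finset.mem_filter, Finset.mem_univ, true_and] at hS
      show insert i ((insert j (S.erase i)).erase j) = S
      rw [Finset.erase_insert (fun h => hS.2 (Finset.mem_of_mem_erase h)),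
        Finset.insert_erase hS.1]
    · intro I hI
      simp only [Finset.mem_filter, Finset.mem_univ, true_and] at hI
      show insert j ((insert i (I.erase j)).erase i) = I
      rw [Finset.erase_insert hI.2, Finset.insert_erase hI.1]
    · intro S hS
      simp only [Finset.mem_filter, Finset.mem_univ, true_and] at hS
      show _ = (-1:ℝ) ^ (ordIdx (insert j (S.erase i)) j
          + ordIdx ((insert j (S.erase i)).erase j) i)
        * mminor G (insert i ((insert j (S.erase i)).erase j)) (insert j (S.erase i))
      rw [Finset.erase_insert (fun h => hS.2 (Finset.mem_of_mem_erase h)),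
        Finset.insert_erase hS.1]

end MainComb

/-- `ξ(F)((I_n+FᵀF)⁻¹)_{ij} = (1 + Σ [F]_{A,I}²)δ_{ij}
− Σ_{A,I : j∈I, i∉I∖{j}} (−1)^{O_I(j)+O_{I∖{j}}(i)} [F]_{A,(I∖{j})∪{i}}[F]_{A,I}`. -/
theorem xi_mul_inv_entry_eq_minors (m n : ℕ) (F : Matrix (Fin m) (Fin n) ℝ) (i j : Fin n) :
    (1 + Fᵀ * F).det * ((1 : Matrix (Fin n) (Fin n) ℝ) + Fᵀ * F)⁻¹ i j =
      (1 + ∑ A : Finset (Fin m), ∑ I : Finset (Fin n),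
          if A.card = I.card ∧ 1 ≤ A.card then (mminor F A I) ^ 2 else 0)
        * (if i = j then (1 : ℝ) else 0)
      - ∑ A : Finset (Fin m), ∑ I : Finset (Fin n),
          if A.card = I.card ∧ j ∈ I ∧ i ∉ I.erase j then
            (-1 : ℝ) ^ (ordIdx I j + ordIdx (I.erase j) i) *
              mminor F A (insert i (I.erase j)) * mminor F A I
          else 0 := by
  classical
  have hpsd : (Fᵀ * F).PosSemidef := by
    have h := Matrix.posSemidef_conjTranspose_mul_self F
    have : Fᴴ = Fᵀ := by
      ext p q
      simp [Matrix.conjTranspose_apply]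
    rwa [this] at h
  have hpd : (1 + Fᵀ * F : Matrix (Fin n) (Fin n) ℝ).PosDef :=
    Matrix.PosDef.add_posSemidef Matrix.PosDef.one hpsd
  have hdet0 : (1 + Fᵀ * F : Matrix (Fin n) (Fin n) ℝ).det ≠ 0 := ne_of_gt hpd.det_pos
  have hL : (1 + Fᵀ * F).det * ((1 : Matrix (Fin n) (Fin n) ℝ) + Fᵀ * F)⁻¹ i j
      = (1 + Fᵀ * F).adjugate i j := by
    rw [Matrix.inv_def, Ring.inverse_eq_inv, Matrix.smul_apply, smul_eq_mul, ← mul_assoc,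
      mul_inv_cancel₀ hdet0, one_mul]
  rw [hL, mainComb]
  have partA : ∑ I : Finset (Fin n), mminor (Fᵀ * F) I I
      = 1 + ∑ A : Finset (Fin m), ∑ I : Finset (Fin n),
          if A.card = I.card ∧ 1 ≤ A.card then (mminor F A I) ^ 2 else 0 := by
    have perI : ∀ I : Finset (Fin n), mminor (Fᵀ * F) I I
        = (if I = ∅ then 1 else 0) + ∑ A : Finset (Fin m),
            if A.card = I.card ∧ 1 ≤ A.card then (mminor F A I) ^ 2 else 0 := by
      intro I
      rw [mminor_mul F I I]
      by_cases hI : I = ∅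
      · subst hI
        rw [if_pos rfl]
        have h1 : (∑ A : Finset (Fin m),
            if A.card = (∅ : Finset (Fin n)).card then mminor F A ∅ * mminor F A ∅ else 0) = 1 := by
          rw [Finset.sum_eq_single (∅ : Finset (Fin m))]
          · simp [mminor_empty]
          · intro A _ hA
            rw [if_neg]
            intro h
            exact hA (Finset.card_eq_zero.mp (by simpa using h))
          · simp
        have h2 : (∑ A : Finset (Fin m),
            if A.card = (∅ : Finset (Fin n)).card ∧ 1 ≤ A.card
            then (mminor F A ∅) ^ 2 else 0) = 0 := by
          apply Finset.sum_eq_zero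
          intro A _
          rw [if_neg]
          rintro ⟨h1', h2'⟩
          rw [Finset.card_empty] at h1'
          omega
        rw [h1, h2, add_zero]
      · rw [if_neg hI, zero_add]
        refine Finset.sum_congr rfl fun A _ => ?_
        by_cases hA : A.card = I.card
        · rw [if_pos hA, if_pos ⟨hA, by
            rw [hA]
            exact Finset.card_pos.mpr (Finset.nonempty_of_ne_empty hI)⟩, sq]
        · rw [if_neg hA, if_neg (fun h => hA h.1)]
    rw [Finset.sum_congr rfl fun I _ => perI I, Finset.sum_add_distrib]
    congr 1
    · simp
    · exact Finset.sum_comm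
  have partB : (∑ I : Finset (Fin n), if j ∈ I ∧ i ∉ I.erase j then
        (-1:ℝ) ^ (ordIdx I j + ordIdx (I.erase j) i)
          * mminor (Fᵀ * F) (insert i (I.erase j)) I else 0)
      = ∑ A : Finset (Fin m), ∑ I : Finset (Fin n),
          if A.card = I.card ∧ j ∈ I ∧ i ∉ I.erase j then
            (-1 : ℝ) ^ (ordIdx I j + ordIdx (I.erase j) i) *
              mminor F A (insert i (I.erase j)) * mminor F A I
          else 0 := by
    have perI : ∀ I : Finset (Fin n), (if j ∈ I ∧ i ∉ I.erase j then
        (-1:ℝ) ^ (ordIdx I j + ordIdx (I.erase j) i)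
          * mminor (Fᵀ * F) (insert i (I.erase j)) I else 0)
        = ∑ A : Finset (Fin m), if A.card = I.card ∧ j ∈ I ∧ i ∉ I.erase j then
            (-1 : ℝ) ^ (ordIdx I j + ordIdx (I.erase j) i) *
              mminor F A (insert i (I.erase j)) * mminor F A I
          else 0 := by
      intro I
      by_cases hc : j ∈ I ∧ i ∉ I.erase j
      · rw [if_pos hc, mminor_mul F (insert i (I.erase j)) I, Finset.mul_sum]
        refine Finset.sum_congr rfl fun A _ => ?_
        by_cases hA : A.card = I.card
        · rw [if_pos hA, if_pos ⟨hA, hc⟩, mul_assoc]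
        · rw [if_neg hA, if_neg (fun h => hA h.1), mul_zero]
      · rw [if_neg hc]
        symm
        apply Finset.sum_eq_zero
        intro A _
        rw [if_neg (fun h => hc h.2)]
    rw [Finset.sum_congr rfl fun I _ => perI I]
    exact Finset.sum_comm
  rw [partA, partB]
end

section
/- Let F be an m×n real matrix with m ≥ 2, set r = min{m,n}, and fix α, β ∈ {1,…,m}. Then the (α,β) minor of the m×m matrix I_m + FFᵀ obtained by deleting row α and column β satisfies [I_m + FFᵀ]_{{α}ᶜ,{β}ᶜ} = Σ_{k=1}^{min{m, r+1}} Σ_{A ⊆ {1,…,m}, |A| = k, α,β ∈ A} Σ_{I' ⊆ {1,…,n}, |I'| = k−1} (−1)^{O_A(α) + O_A(β) + α + β} [F]_{A∖{α}, I'} [F]_{A∖{β}, I'}. -/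
open Matrix Finset

set_option linter.unusedSectionVars false
set_option maxHeartbeats 1000000

section CauchyBinet

variable {k : ℕ} {C : Type*} [Fintype C] [DecidableEq C]

/-- A fixed enumeration of the elements of a finset of cardinality `k`. -/
noncomputable def senum (S : Finset C) (h : S.card = k) : Fin k → C :=
  fun i => (S.equivFin.symm (Fin.cast h.symm i) : C)

lemma senum_injective (S : Finset C) (h : S.card = k) : Function.Injective (senum S h) := by
  intro a b hab
  have : S.equivFin.symm (Fin.cast h.symm a) = S.equivFin.symm (Fin.cast h.symm b) :=
    Subtype.coe_injective hab
  have := S.equivFin.symm.injective this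
  simpa [Fin.ext_iff] using congrArg Fin.val this

lemma senum_mem (S : Finset C) (h : S.card = k) (i : Fin k) : senum S h i ∈ S :=
  (S.equivFin.symm (Fin.cast h.symm i)).2

lemma senum_surj (S : Finset C) (h : S.card = k) {c : C} (hc : c ∈ S) :
    ∃ i, senum S h i = c := by
  refine ⟨Fin.cast h (S.equivFin ⟨c, hc⟩), ?_⟩
  have : Fin.cast h.symm (Fin.cast h (S.equivFin ⟨c, hc⟩)) = S.equivFin ⟨c, hc⟩ := by
    ext; simp
  rw [senum, this, Equiv.symm_apply_apply]

/-- The product of the two maximal minors of `P` and `Q` selected by the column set `S`. -/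
noncomputable def pairMinor (P Q : Matrix (Fin k) C ℝ) (S : Finset C) : ℝ :=
  if h : S.card = k then
    det (P.submatrix id (senum S h)) * det (Q.submatrix id (senum S h))
  else 0

lemma pairMinor_eq_det {P Q : Matrix (Fin k) C ℝ} {S : Finset C} (h : S.card = k)
    {D : Type*} [Fintype D] [DecidableEq D] (u : D ≃ Fin k) (e : D → C)
    (he : Function.Injective e) (hmem : ∀ d, e d ∈ S) :
    pairMinor P Q S =
      det (Matrix.of fun d d' : D => P (u d) (e d')) *
      det (Matrix.of fun d d' : D => Q (u d) (e d')) := by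
  classical
  set g := senum S h with hg
  have hw0 : ∀ d, ∃ i, g i = e d := fun d => senum_surj S h (hmem d)
  choose w hwspec using hw0
  have hwinj : Function.Injective w := fun a b hab => he (by rw [← hwspec a, ← hwspec b, hab])
  have hcardD : Fintype.card D = k := by
    simpa using Fintype.card_congr u
  have hwbij : Function.Bijective w :=
    (Fintype.bijective_iff_injective_and_card w).2 ⟨hwinj, by simp [hcardD]⟩
  set σ : Equiv.Perm (Fin k) := u.symm.trans (Equiv.ofBijective w hwbij) with hσ
  have h1 : ∀ M : Matrix (Fin k) C ℝ,
      det (Matrix.of fun d d' : D => M (u d) (e d')) =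
        (Equiv.Perm.sign σ : ℝ) * det (M.submatrix id g) := by
    intro M
    have hmat : (Matrix.of fun d d' : D => M (u d) (e d')) =
        ((M.submatrix id g).submatrix id σ).submatrix u u := by
      ext d d'
      simp only [Matrix.of_apply, Matrix.submatrix_apply, id_eq]
      rw [hσ]
      simp [Equiv.ofBijective_apply, hwspec]
    rw [hmat, det_submatrix_equiv_self, det_permute']
  rw [pairMinor, dif_pos h, h1 P, h1 Q]
  have hsq : (Equiv.Perm.sign σ : ℝ) * (Equiv.Perm.sign σ : ℝ) = 1 := by
    rcases Int.units_eq_one_or (Equiv.Perm.sign σ) with hs | hs <;> simp [hs]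
  calc det (P.submatrix id g) * det (Q.submatrix id g)
      = ((Equiv.Perm.sign σ : ℝ) * (Equiv.Perm.sign σ : ℝ)) *
        (det (P.submatrix id g) * det (Q.submatrix id g)) := by rw [hsq, one_mul]
    _ = _ := by ring

theorem det_mul_transpose_eq_sum_pairMinor (P Q : Matrix (Fin k) C ℝ) :
    det (P * Qᵀ) = ∑ S ∈ Finset.powersetCard k (Finset.univ : Finset C), pairMinor P Q S := by
  classical
  have step1 : det (P * Qᵀ) =
      ∑ p : Fin k → C, (∏ i, Q i (p i)) * det (P.submatrix id p) := by
    simp only [det_apply', mul_apply, transpose_apply, Finset.prod_univ_sum,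
      Finset.mul_sum, Fintype.piFinset_univ, Matrix.submatrix_apply, id_eq]
    rw [Finset.sum_comm]
    refine Finset.sum_congr rfl fun p _ => ?_
    refine Finset.sum_congr rfl fun σ _ => ?_
    rw [Finset.prod_mul_distrib]
    ring
  have step2 : ∑ p : Fin k → C, (∏ i, Q i (p i)) * det (P.submatrix id p)
      = ∑ p ∈ Finset.univ.filter (fun p : Fin k → C => Function.Injective p),
          (∏ i, Q i (p i)) * det (P.submatrix id p) := by
    refine (Finset.sum_filter_of_ne fun p _ hne => ?_).symm
    by_contra hni
    apply hne
    rw [Function.not_injective_iff] at hni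
    obtain ⟨i, j, hpij, hij⟩ := hni
    have : det (P.submatrix id p) = 0 :=
      Matrix.det_zero_of_column_eq hij fun r => by simp [hpij]
    simp [this]
  rw [step1, step2]
  have hmaps : ∀ p ∈ Finset.univ.filter (fun p : Fin k → C => Function.Injective p),
      Finset.image p Finset.univ ∈ Finset.powersetCard k (Finset.univ : Finset C) := by
    intro p hp
    rw [Finset.mem_filter] at hp
    rw [Finset.mem_powersetCard_univ, Finset.card_image_of_injective _ hp.2]
    simp
  rw [← Finset.sum_fiberwise_of_maps_to hmaps]
  refine Finset.sum_congr rfl fun S hS => ?_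
  have hcard : S.card = k := Finset.mem_powersetCard_univ.1 hS
  rw [pairMinor, dif_pos hcard]
  set g := senum S hcard with hg
  -- the fiber over S is the image of `Perm (Fin k)` under `σ ↦ g ∘ σ`
  have hfiber : ∑ p ∈ (Finset.univ.filter fun p : Fin k → C => Function.Injective p).filter
        (fun p => Finset.image p Finset.univ = S),
      (∏ i, Q i (p i)) * det (P.submatrix id p)
      = ∑ σ : Equiv.Perm (Fin k), (∏ i, Q i (g (σ i))) * det (P.submatrix id (g ∘ σ)) := by
    refine (Finset.sum_bij (fun (σ : Equiv.Perm (Fin k)) _ => g ∘ σ) ?_ ?_ ?_ ?_).symm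
    · intro σ _
      simp only [Finset.mem_filter, Finset.mem_univ, true_and]
      constructor
      · exact (senum_injective S hcard).comp σ.injective
      · apply Finset.eq_of_subset_of_card_le
        · intro c hc
          simp only [Finset.mem_image] at hc
          obtain ⟨i, _, rfl⟩ := hc
          exact senum_mem S hcard _
        · rw [hcard, Finset.card_image_of_injective _
            ((senum_injective S hcard).comp σ.injective)]
          simp
    · intro σ₁ _ σ₂ _ hs
      exact Equiv.ext fun i => (senum_injective S hcard) (congrFun hs i)
    · intro p hp
      rw [Finset.mem_filter, Finset.mem_filter] at hp
      obtain ⟨⟨-, hpinj⟩, hpim⟩ := hp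
      have hw0 : ∀ i, ∃ j, g j = p i := by
        intro i
        apply senum_surj S hcard
        rw [← hpim]
        exact Finset.mem_image_of_mem p (Finset.mem_univ i)
      choose w hwspec using hw0
      have hwinj : Function.Injective w := fun a b hab =>
        hpinj (by rw [← hwspec a, ← hwspec b, hab])
      have hwbij : Function.Bijective w :=
        (Fintype.bijective_iff_injective_and_card w).2 ⟨hwinj, rfl⟩
      refine ⟨Equiv.ofBijective w hwbij, Finset.mem_univ _, ?_⟩
      ext i
      simp [Equiv.ofBijective_apply, hwspec]
    · exact fun σ _ => rfl
  rw [hfiber]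
  have hperm : ∀ σ : Equiv.Perm (Fin k),
      det (P.submatrix id (g ∘ σ)) = (Equiv.Perm.sign σ : ℝ) * det (P.submatrix id g) := by
    intro σ
    have : P.submatrix id (g ∘ σ) = (P.submatrix id g).submatrix id σ := rfl
    rw [this, det_permute']
  calc ∑ σ : Equiv.Perm (Fin k), (∏ i, Q i (g (σ i))) * det (P.submatrix id (g ∘ σ))
      = det (P.submatrix id g) *
        ∑ σ : Equiv.Perm (Fin k), (Equiv.Perm.sign σ : ℝ) * ∏ i, Q i (g (σ i)) := by
        rw [Finset.mul_sum]
        refine Finset.sum_congr rfl fun σ _ => ?_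
        rw [hperm σ]; ring
    _ = det (P.submatrix id g) * det ((Q.submatrix id g)ᵀ) := by
        have hdet : det ((Q.submatrix id g)ᵀ) =
            ∑ σ : Equiv.Perm (Fin k), (Equiv.Perm.sign σ : ℝ) * ∏ i, Q i (g (σ i)) := by
          rw [det_apply']
          rfl
        rw [hdet]
    _ = det (P.submatrix id g) * det (Q.submatrix id g) := by rw [det_transpose]

end CauchyBinet


lemma ordIdx_orderEmbOfFin {N t : ℕ} {A : Finset (Fin N)} (h : A.card = t) (p : Fin t) :
    ordIdx A (A.orderEmbOfFin h p) = p + 1 := by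
  classical
  set a := A.orderEmbOfFin h with ha
  have hmem : a p ∈ A := Finset.orderEmbOfFin_mem A h p
  rw [ordIdx, Finset.insert_eq_self.2 hmem]
  have himg : A.filter (fun x => x ≤ a p) = (Finset.Iic p).image a := by
    ext x
    simp only [Finset.mem_filter, Finset.mem_image, Finset.mem_Iic]
    constructor
    · rintro ⟨hxA, hxle⟩
      have hx : x ∈ Set.range a := by
        rw [ha, Finset.range_orderEmbOfFin]
        exact hxA
      obtain ⟨j, rfl⟩ := hx
      exact ⟨j, a.le_iff_le.1 hxle, rfl⟩
    · rintro ⟨j, hj, rfl⟩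
      exact ⟨Finset.orderEmbOfFin_mem A h j, a.le_iff_le.2 hj⟩
  rw [himg, Finset.card_image_of_injective _ a.injective, Fin.card_Iic]

lemma orderEmbOfFin_erase {N t : ℕ} {A : Finset (Fin N)} (h : A.card = t + 1) (p : Fin (t + 1))
    (h' : (A.erase (A.orderEmbOfFin h p)).card = t) (j : Fin t) :
    (A.erase (A.orderEmbOfFin h p)).orderEmbOfFin h' j = A.orderEmbOfFin h (p.succAbove j) := by
  classical
  have key := Finset.orderEmbOfFin_unique h'
    (f := fun j : Fin t => A.orderEmbOfFin h (p.succAbove j)) ?_ ?_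
  · exact (congrFun key j).symm
  · intro x
    rw [Finset.mem_erase]
    refine ⟨fun hc => ?_, Finset.orderEmbOfFin_mem A h _⟩
    exact (Fin.succAbove_ne p x) ((A.orderEmbOfFin h).injective hc)
  · exact (A.orderEmbOfFin h).strictMono.comp (Fin.strictMono_succAbove p)

/-- Generic evaluation of a determinant with block structure `[[1, *], [0, (e_p | G)]]`. -/
lemma det_block_unit_col {s t : ℕ} (W : Matrix (Fin s ⊕ Fin (t + 1)) (Fin s ⊕ Fin (t + 1)) ℝ)
    (p : Fin (t + 1))
    (h11 : ∀ i i', W (Sum.inl i) (Sum.inl i') = if i = i' then 1 else 0)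
    (h21 : ∀ j i', W (Sum.inr j) (Sum.inl i') = 0)
    (hcol0 : ∀ j, W (Sum.inr j) (Sum.inr 0) = if j = p then 1 else 0) :
    det W = (-1 : ℝ) ^ (p : ℕ) *
      det (Matrix.of fun (j : Fin t) (j' : Fin t) => W (Sum.inr (p.succAbove j)) (Sum.inr j'.succ)) := by
  have hW : W = Matrix.fromBlocks 1 (Matrix.of fun i j' => W (Sum.inl i) (Sum.inr j')) 0
      (Matrix.of fun j j' => W (Sum.inr j) (Sum.inr j')) := by
    ext d d'
    rcases d with i | j <;> rcases d' with i' | j' <;>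
      simp [Matrix.fromBlocks, h11, h21, Matrix.one_apply]
  rw [hW, Matrix.det_fromBlocks_zero₂₁, Matrix.det_one, one_mul]
  rw [Matrix.det_succ_column_zero]
  rw [Finset.sum_eq_single p]
  · rw [Matrix.of_apply, hcol0 p, if_pos rfl, mul_one]
    congr 1
  · intro j _ hj
    rw [Matrix.of_apply, hcol0 j, if_neg hj]
    ring
  · intro h
    exact absurd (Finset.mem_univ p) h

section Structured

variable {m n : ℕ}

/-- Column type: one extra unit column, `m` identity columns, `n` columns of `F`. -/
abbrev CT (m n : ℕ) := Unit ⊕ Fin m ⊕ Fin n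

def Pmat (F : Matrix (Fin m) (Fin n) ℝ) (α : Fin m) : Matrix (Fin m) (CT m n) ℝ :=
  Matrix.of fun i c =>
    Sum.elim (fun _ : Unit => if i = α then (1 : ℝ) else 0)
      (Sum.elim (fun j => if i = α then 0 else if i = j then (1 : ℝ) else 0)
        (fun c' => if i = α then 0 else F i c')) c

def Qmat (F : Matrix (Fin m) (Fin n) ℝ) (β : Fin m) : Matrix (Fin m) (CT m n) ℝ :=
  Matrix.of fun i c =>
    Sum.elim (fun _ : Unit => if i = β then (1 : ℝ) else 0)
      (Sum.elim (fun j => if i = j then (1 : ℝ) else 0) (fun c' => F i c')) c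

lemma updateRow_eq_mul (F : Matrix (Fin m) (Fin n) ℝ) (α β : Fin m) :
    (1 + F * Fᵀ).updateRow α (Pi.single β 1) = Pmat F α * (Qmat F β)ᵀ := by
  classical
  ext i q
  rw [Matrix.mul_apply]
  rw [Fintype.sum_sum_type, Fintype.sum_sum_type]
  by_cases hi : i = α
  · subst hi
    rw [Matrix.updateRow_self]
    simp [Pmat, Qmat, Pi.single_apply, eq_comm]
  · rw [Matrix.updateRow_ne hi]
    simp only [Pmat, Qmat, Matrix.of_apply, Sum.elim_inl, Sum.elim_inr, if_neg hi,
      Matrix.transpose_apply, Matrix.add_apply, Matrix.one_apply, Matrix.mul_apply]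
    simp [Finset.mul_sum, ite_mul, mul_ite]

lemma S_card_decomp (S : Finset (CT m n)) (h0 : (Sum.inl () : CT m n) ∈ S) :
    S.card = 1 + (Finset.univ.filter fun j : Fin m => (Sum.inr (Sum.inl j) : CT m n) ∈ S).card
      + (Finset.univ.filter fun c : Fin n => (Sum.inr (Sum.inr c) : CT m n) ∈ S).card := by
  classical
  set S₀ := Finset.univ.filter fun j : Fin m => (Sum.inr (Sum.inl j) : CT m n) ∈ S with hS₀
  set S₁ := Finset.univ.filter fun c : Fin n => (Sum.inr (Sum.inr c) : CT m n) ∈ S with hS₁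
  have hdec : S = insert (Sum.inl ())
      ((S₀.image fun j => (Sum.inr (Sum.inl j) : CT m n)) ∪
        (S₁.image fun c => (Sum.inr (Sum.inr c) : CT m n))) := by
    ext x
    rcases x with u | j | c
    · cases u; simp [h0]
    · simp [hS₀]
    · simp [hS₁]
  rw [hdec]
  rw [Finset.card_insert_of_notMem (by simp)]
  rw [Finset.card_union_of_disjoint (by simp [Finset.disjoint_left])]
  rw [Finset.card_image_of_injective _ (fun a b h => by simpa using h),
    Finset.card_image_of_injective _ (fun a b h => by simpa using h)]
  omega

lemma pairMinor_bad (F : Matrix (Fin m) (Fin n) ℝ) (α β : Fin m) (S : Finset (CT m n))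
    (hcard : S.card = m)
    (hbad : ¬((Sum.inl () : CT m n) ∈ S ∧ (Sum.inr (Sum.inl α) : CT m n) ∉ S ∧
      (Sum.inr (Sum.inl β) : CT m n) ∉ S)) :
    pairMinor (Pmat F α) (Qmat F β) S = 0 := by
  classical
  rw [pairMinor, dif_pos hcard]
  by_cases h0 : (Sum.inl () : CT m n) ∈ S
  · have hor : (Sum.inr (Sum.inl α) : CT m n) ∈ S ∨ (Sum.inr (Sum.inl β) : CT m n) ∈ S := by
      by_contra hc
      push_neg at hc
      exact hbad ⟨h0, hc.1, hc.2⟩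
    rcases hor with hc | hc
    · obtain ⟨j, hj⟩ := senum_surj S hcard hc
      have hz : det ((Pmat F α).submatrix id (senum S hcard)) = 0 := by
        apply Matrix.det_eq_zero_of_column_eq_zero j
        intro i
        show Pmat F α i (senum S hcard j) = 0
        rw [hj]
        by_cases hiα : i = α <;> simp [Pmat, hiα]
      rw [hz, zero_mul]
    · obtain ⟨j0, hj0⟩ := senum_surj S hcard h0
      obtain ⟨j1, hj1⟩ := senum_surj S hcard hc
      have hne : j0 ≠ j1 := by
        intro hje
        rw [hje, hj1] at hj0
        exact absurd hj0 (by simp)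
      have hz : det ((Qmat F β).submatrix id (senum S hcard)) = 0 := by
        apply Matrix.det_zero_of_column_eq hne
        intro r
        show Qmat F β r (senum S hcard j0) = Qmat F β r (senum S hcard j1)
        rw [hj0, hj1]
        simp [Qmat]
      rw [hz, mul_zero]
  · have hz : det ((Pmat F α).submatrix id (senum S hcard)) = 0 := by
      apply Matrix.det_eq_zero_of_row_eq_zero α
      intro j
      show Pmat F α α (senum S hcard j) = 0
      rcases hgj : senum S hcard j with u | j' | c'
      · cases u
        exact absurd (hgj ▸ senum_mem S hcard j) h0
      · simp [Pmat]
      · simp [Pmat]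
    rw [hz, zero_mul]

lemma pairMinor_good (F : Matrix (Fin m) (Fin n) ℝ) (α β : Fin m) (S : Finset (CT m n))
    (A : Finset (Fin m)) (I' : Finset (Fin n))
    (hA : ∀ j, j ∈ A ↔ (Sum.inr (Sum.inl j) : CT m n) ∉ S)
    (hI : ∀ c, c ∈ I' ↔ (Sum.inr (Sum.inr c) : CT m n) ∈ S)
    (hcard : S.card = m) (h0 : (Sum.inl () : CT m n) ∈ S)
    (hαA : α ∈ A) (hβA : β ∈ A) :
    pairMinor (Pmat F α) (Qmat F β) S =
      (-1 : ℝ) ^ (ordIdx A α + ordIdx A β) *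
        (mminor F (A.erase α) I' * mminor F (A.erase β) I') := by
  classical
  have hAc : Aᶜ = Finset.univ.filter fun j : Fin m => (Sum.inr (Sum.inl j) : CT m n) ∈ S := by
    ext j
    simp [hA j]
  have hIc : I' = Finset.univ.filter fun c : Fin n => (Sum.inr (Sum.inr c) : CT m n) ∈ S := by
    ext c
    simp [hI c]
  have hdecomp := S_card_decomp S h0
  rw [← hAc, ← hIc] at hdecomp
  have hAcard_le : A.card ≤ m := by simpa using Finset.card_le_univ A
  have hAcc : Aᶜ.card = m - A.card := by simp [Finset.card_compl]
  have h1le : 1 ≤ A.card := Finset.card_pos.2 ⟨α, hαA⟩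
  set k1 := I'.card with hk1
  have hAcard : A.card = k1 + 1 := by omega
  have hS0card : Aᶜ.card + (k1 + 1) = m := by omega
  set s₀ := Aᶜ.orderEmbOfFin (rfl : Aᶜ.card = Aᶜ.card) with hs₀
  set a := A.orderEmbOfFin hAcard with ha
  set s₁ := I'.orderEmbOfFin (rfl : I'.card = I'.card) with hs₁def
  have hdisj : ∀ (i : Fin Aᶜ.card) (j : Fin (k1 + 1)), s₀ i ≠ a j := by
    intro i j hc
    have h1 : s₀ i ∈ Aᶜ := Finset.orderEmbOfFin_mem _ _ i
    have h2 : a j ∈ A := Finset.orderEmbOfFin_mem _ _ j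
    rw [hc] at h1
    exact (Finset.mem_compl.1 h1) h2
  have hs₀A : ∀ i : Fin Aᶜ.card, s₀ i ≠ α := by
    intro i hc
    have h1 : s₀ i ∈ Aᶜ := Finset.orderEmbOfFin_mem _ _ i
    rw [hc] at h1
    exact (Finset.mem_compl.1 h1) hαA
  have huinj : Function.Injective (Sum.elim s₀ a : Fin Aᶜ.card ⊕ Fin (k1 + 1) → Fin m) :=
    Function.Injective.sumElim s₀.injective a.injective hdisj
  have hubij : Function.Bijective (Sum.elim s₀ a : Fin Aᶜ.card ⊕ Fin (k1 + 1) → Fin m) :=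
    (Fintype.bijective_iff_injective_and_card _).2 ⟨huinj, by simp [hS0card]⟩
  set u : (Fin Aᶜ.card ⊕ Fin (k1 + 1)) ≃ Fin m := Equiv.ofBijective _ hubij with hu
  set efun : Fin Aᶜ.card ⊕ Fin (k1 + 1) → CT m n :=
    Sum.elim (fun i => Sum.inr (Sum.inl (s₀ i)))
      (fun j => Fin.cases (Sum.inl ()) (fun j' => Sum.inr (Sum.inr (s₁ j'))) j) with he
  have heinj : Function.Injective efun := by
    intro d d' hdd
    rcases d with i | j <;> rcases d' with i' | j'
    · rw [he] at hdd
      simp only [Sum.elim_inl, Sum.inr.injEq, Sum.inl.injEq] at hdd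
      rw [s₀.injective hdd]
    · exfalso
      rcases Fin.eq_zero_or_eq_succ j' with rfl | ⟨j'', rfl⟩ <;>
        simp [he] at hdd
    · exfalso
      rcases Fin.eq_zero_or_eq_succ j with rfl | ⟨j'', rfl⟩ <;>
        simp [he] at hdd
    · rcases Fin.eq_zero_or_eq_succ j with rfl | ⟨b, rfl⟩ <;>
        rcases Fin.eq_zero_or_eq_succ j' with rfl | ⟨b', rfl⟩
      · rfl
      · simp [he] at hdd
      · simp [he] at hdd
      · rw [he] at hdd
        simp only [Sum.elim_inr, Fin.cases_succ, Sum.inr.injEq] at hdd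
        rw [s₁.injective hdd]
  have hemem : ∀ d, efun d ∈ S := by
    intro d
    rcases d with i | j
    · have h1 : s₀ i ∈ Aᶜ := Finset.orderEmbOfFin_mem _ _ i
      have h2 : s₀ i ∉ A := Finset.mem_compl.1 h1
      have h3 : (Sum.inr (Sum.inl (s₀ i)) : CT m n) ∈ S := by
        by_contra hc
        exact h2 ((hA _).2 hc)
      simpa [he] using h3
    · rcases Fin.eq_zero_or_eq_succ j with rfl | ⟨j'', rfl⟩
      · simpa [he] using h0
      · have h1 : s₁ j'' ∈ I' := Finset.orderEmbOfFin_mem _ _ j''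
        simpa [he] using (hI _).1 h1
  rw [pairMinor_eq_det hcard u efun heinj hemem]
  -- positions of α and β inside A
  have hpα : ∃ p : Fin (k1 + 1), a p = α := by
    have hr : α ∈ Set.range a := by
      rw [ha, Finset.range_orderEmbOfFin]
      exact hαA
    exact hr
  have hpβ : ∃ q : Fin (k1 + 1), a q = β := by
    have hr : β ∈ Set.range a := by
      rw [ha, Finset.range_orderEmbOfFin]
      exact hβA
    exact hr
  obtain ⟨p, hp⟩ := hpα
  obtain ⟨q, hq⟩ := hpβ
  have huinl : ∀ i, u (Sum.inl i) = s₀ i := fun i => rfl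
  have huinr : ∀ j, u (Sum.inr j) = a j := fun j => rfl
  have herase : ∀ (γ : Fin m) (r : Fin (k1 + 1)) (hγ : a r = γ)
      (h' : (A.erase γ).card = I'.card) (j : Fin I'.card),
      (A.erase γ).orderEmbOfFin h' j = a (r.succAbove j) := by
    intro γ r hγ h' j
    subst hγ
    exact orderEmbOfFin_erase hAcard r h' j
  have hecard : ∀ γ : Fin m, γ ∈ A → (A.erase γ).card = I'.card := by
    intro γ hγ
    rw [Finset.card_erase_of_mem hγ, hAcard]
    omega
  -- evaluate the P-determinant
  have hPdet : det (Matrix.of fun d d' : Fin Aᶜ.card ⊕ Fin (k1 + 1) =>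
        Pmat F α (u d) (efun d')) = (-1 : ℝ) ^ (p : ℕ) * mminor F (A.erase α) I' := by
    rw [det_block_unit_col _ p ?_ ?_ ?_]
    · congr 1
      rw [mminor, dif_pos (hecard α hαA)]
      congr 1
      ext j j'
      have hne : a (p.succAbove j) ≠ α := by
        intro hc
        exact Fin.succAbove_ne p j (a.injective (by rw [hc, ← hp]))
      simp only [Matrix.of_apply, huinr, he, Sum.elim_inr, Fin.cases_succ, Pmat,
        if_neg hne]
      rw [herase α p hp (hecard α hαA) j]
    · intro i i'
      simp only [Matrix.of_apply, huinl, he, Sum.elim_inl, Pmat, if_neg (hs₀A i)]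
      simp [s₀.injective.eq_iff]
    · intro j i'
      simp only [Matrix.of_apply, huinr, he, Sum.elim_inl, Pmat]
      by_cases hja : a j = α
      · simp [hja]
      · simp [hja, (hdisj i' j).symm]
    · intro j
      simp only [Matrix.of_apply, huinr, he, Sum.elim_inr, Fin.cases_zero, Pmat]
      have : a j = α ↔ j = p := by
        constructor
        · intro hc
          exact a.injective (by rw [hc, hp])
        · intro hc
          rw [hc, hp]
      simp only [Sum.elim_inl]
      split_ifs with h1 h2 h2
      · rfl
      · exact absurd (this.1 h1) h2
      · exact absurd (this.2 h2) h1
      · rfl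
  -- evaluate the Q-determinant
  have hQdet : det (Matrix.of fun d d' : Fin Aᶜ.card ⊕ Fin (k1 + 1) =>
        Qmat F β (u d) (efun d')) = (-1 : ℝ) ^ (q : ℕ) * mminor F (A.erase β) I' := by
    rw [det_block_unit_col _ q ?_ ?_ ?_]
    · congr 1
      rw [mminor, dif_pos (hecard β hβA)]
      congr 1
      ext j j'
      simp only [Matrix.of_apply, huinr, he, Sum.elim_inr, Fin.cases_succ, Qmat]
      rw [herase β q hq (hecard β hβA) j]
    · intro i i'
      simp only [Matrix.of_apply, huinl, he, Sum.elim_inl, Qmat]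
      simp [s₀.injective.eq_iff]
    · intro j i'
      simp only [Matrix.of_apply, huinr, he, Sum.elim_inl, Qmat]
      simp [(hdisj i' j).symm]
    · intro j
      simp only [Matrix.of_apply, huinr, he, Sum.elim_inr, Fin.cases_zero, Qmat]
      have : a j = β ↔ j = q := by
        constructor
        · intro hc
          exact a.injective (by rw [hc, hq])
        · intro hc
          rw [hc, hq]
      simp only [Sum.elim_inl]
      split_ifs with h1 h2 h2
      · rfl
      · exact absurd (this.1 h1) h2
      · exact absurd (this.2 h2) h1
      · rfl
  rw [hPdet, hQdet]
  have hoα : ordIdx A α = (p : ℕ) + 1 := by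
    rw [← hp, ha, ordIdx_orderEmbOfFin]
  have hoβ : ordIdx A β = (q : ℕ) + 1 := by
    rw [← hq, ha, ordIdx_orderEmbOfFin]
  rw [hoα, hoβ]
  have hsgn : (-1 : ℝ) ^ ((p : ℕ) + 1 + ((q : ℕ) + 1)) = (-1 : ℝ) ^ (p : ℕ) * (-1 : ℝ) ^ (q : ℕ) := by
    ring
  rw [hsgn]
  ring

end Structured

/-- Expansion of the `(α,β)` minor of `I_m + FFᵀ` (delete row `α`, column `β`) in terms of
the minors of `F`. -/
theorem minor_one_add_mul_transpose (m n : ℕ) (hm : 2 ≤ m)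
    (F : Matrix (Fin m) (Fin n) ℝ) (α β : Fin m) :
    mminor (1 + F * Fᵀ) ({α} : Finset (Fin m))ᶜ ({β} : Finset (Fin m))ᶜ =
      ∑ k ∈ Finset.Icc 1 (min m (min m n + 1)),
        ∑ A ∈ Finset.powersetCard k (Finset.univ : Finset (Fin m)),
          ∑ I' ∈ Finset.powersetCard (k - 1) (Finset.univ : Finset (Fin n)),
            if α ∈ A ∧ β ∈ A then
              (-1 : ℝ) ^ (ordIdx A α + ordIdx A β + α.val + β.val) *
                mminor F (A.erase α) I' * mminor F (A.erase β) I'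
            else 0 := by
  classical
  obtain ⟨m', rfl⟩ : ∃ m', m = m' + 1 := ⟨m - 1, by omega⟩
  set v : ℕ := (α : ℕ) + (β : ℕ) with hv
  -- Step 1: the minor as a cofactor-type determinant
  have hcβ : ({β} : Finset (Fin (m' + 1)))ᶜ.card = m' := by
    simp [Finset.card_compl]
  have hmmc : ({α} : Finset (Fin (m' + 1)))ᶜ.card = ({β} : Finset (Fin (m' + 1)))ᶜ.card := by
    simp [Finset.card_compl]
  have hcastmono : StrictMono (Fin.cast hcβ) := fun x y hxy => by
    rw [Fin.lt_def, Fin.coe_cast, Fin.coe_cast]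
    exact hxy
  have hembα : ∀ p : Fin (({β} : Finset (Fin (m' + 1)))ᶜ.card),
      ({α} : Finset (Fin (m' + 1)))ᶜ.orderEmbOfFin hmmc p = α.succAbove (Fin.cast hcβ p) := by
    have key := Finset.orderEmbOfFin_unique hmmc
      (f := fun p : Fin (({β} : Finset (Fin (m' + 1)))ᶜ.card) => α.succAbove (Fin.cast hcβ p))
      (fun x => by
        rw [Finset.mem_compl, Finset.mem_singleton]
        exact Fin.succAbove_ne α _) ((Fin.strictMono_succAbove α).comp hcastmono)
    exact fun p => (congrFun key p).symm
  have hembβ : ∀ q : Fin (({β} : Finset (Fin (m' + 1)))ᶜ.card),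
      ({β} : Finset (Fin (m' + 1)))ᶜ.orderEmbOfFin rfl q = β.succAbove (Fin.cast hcβ q) := by
    have key := Finset.orderEmbOfFin_unique (rfl : ({β} : Finset (Fin (m' + 1)))ᶜ.card = _)
      (f := fun q : Fin (({β} : Finset (Fin (m' + 1)))ᶜ.card) => β.succAbove (Fin.cast hcβ q))
      (fun x => by
        rw [Finset.mem_compl, Finset.mem_singleton]
        exact Fin.succAbove_ne β _) ((Fin.strictMono_succAbove β).comp hcastmono)
    exact fun q => (congrFun key q).symm
  set M : Matrix (Fin (m' + 1)) (Fin (m' + 1)) ℝ := 1 + F * Fᵀ with hM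
  have hL1 : mminor M ({α} : Finset (Fin (m' + 1)))ᶜ ({β} : Finset (Fin (m' + 1)))ᶜ
      = det (M.submatrix α.succAbove β.succAbove) := by
    rw [mminor, dif_pos hmmc]
    have hmat : (Matrix.of fun p q : Fin (({β} : Finset (Fin (m' + 1)))ᶜ.card) =>
        M ((({α} : Finset (Fin (m' + 1)))ᶜ.orderEmbOfFin hmmc) p)
          ((({β} : Finset (Fin (m' + 1)))ᶜ.orderEmbOfFin rfl) q))
        = (M.submatrix α.succAbove β.succAbove).submatrix
            (finCongr hcβ) (finCongr hcβ) := by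
      ext p q
      simp [hembα p, hembβ q]
    rw [hmat, Matrix.det_submatrix_equiv_self]
  have hrow : det (M.updateRow α (Pi.single β 1)) =
      (-1 : ℝ) ^ v * det (M.submatrix α.succAbove β.succAbove) := by
    rw [Matrix.det_succ_row _ α, Finset.sum_eq_single β]
    · simp [Matrix.updateRow_self, Pi.single_eq_same, Matrix.submatrix_updateRow_succAbove, hv]
    · intro j _ hj
      simp [Matrix.updateRow_self, Pi.single_eq_of_ne hj]
    · simp
  have hL2 : mminor M ({α} : Finset (Fin (m' + 1)))ᶜ ({β} : Finset (Fin (m' + 1)))ᶜ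
      = (-1 : ℝ) ^ v * det (M.updateRow α (Pi.single β 1)) := by
    rw [hL1, hrow, ← mul_assoc, ← pow_add]
    rw [Even.neg_one_pow ⟨v, by ring⟩, one_mul]
  rw [hL2, hM, updateRow_eq_mul, det_mul_transpose_eq_sum_pairMinor]
  -- restrict the sum to the "good" subsets
  rw [← Finset.sum_filter_of_ne (p := fun S : Finset (CT (m' + 1) n) =>
      (Sum.inl () : CT (m' + 1) n) ∈ S ∧ (Sum.inr (Sum.inl α) : CT (m' + 1) n) ∉ S ∧
        (Sum.inr (Sum.inl β) : CT (m' + 1) n) ∉ S)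
    (fun S hS hne => by
      by_contra hbad
      exact hne (pairMinor_bad F α β S (Finset.mem_powersetCard_univ.1 hS) hbad))]
  set goodT : Finset (Fin (m' + 1)) × Finset (Fin n) → Prop := fun x =>
    α ∈ x.1 ∧ β ∈ x.1 ∧ x.2.card + 1 = x.1.card with hgoodT
  set T' : Finset (Fin (m' + 1)) → Finset (Fin n) → ℝ := fun A I' =>
    (-1 : ℝ) ^ (ordIdx A α + ordIdx A β) *
      (mminor F (A.erase α) I' * mminor F (A.erase β) I') with hT'
  have hbij : ∑ S ∈ (Finset.powersetCard (m' + 1)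
        (Finset.univ : Finset (CT (m' + 1) n))).filter
        (fun S => (Sum.inl () : CT (m' + 1) n) ∈ S ∧ (Sum.inr (Sum.inl α) : CT (m' + 1) n) ∉ S ∧
          (Sum.inr (Sum.inl β) : CT (m' + 1) n) ∉ S),
      pairMinor (Pmat F α) (Qmat F β) S
      = ∑ x ∈ (Finset.univ.powerset ×ˢ Finset.univ.powerset).filter goodT, T' x.1 x.2 := by
    refine Finset.sum_bij'
      (fun S _ => ((Finset.univ.filter fun j : Fin (m' + 1) =>
          (Sum.inr (Sum.inl j) : CT (m' + 1) n) ∈ S)ᶜ,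
        Finset.univ.filter fun c : Fin n => (Sum.inr (Sum.inr c) : CT (m' + 1) n) ∈ S))
      (fun x _ => insert (Sum.inl ())
        ((x.1ᶜ.image fun j => (Sum.inr (Sum.inl j) : CT (m' + 1) n)) ∪
          (x.2.image fun c => (Sum.inr (Sum.inr c) : CT (m' + 1) n))))
      ?_ ?_ ?_ ?_ ?_
    · intro S hS
      rw [Finset.mem_filter] at hS
      obtain ⟨hS1, hg0, hgα, hgβ⟩ := hS
      have hcard := Finset.mem_powersetCard_univ.1 hS1
      have hdec := S_card_decomp S hg0
      rw [Finset.mem_filter]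
      constructor
      · rw [Finset.mem_product]
        exact ⟨Finset.mem_powerset.2 (Finset.subset_univ _),
          Finset.mem_powerset.2 (Finset.subset_univ _)⟩
      · refine ⟨by simp [hgα], by simp [hgβ], ?_⟩
        show (Finset.univ.filter fun c : Fin n =>
            (Sum.inr (Sum.inr c) : CT (m' + 1) n) ∈ S).card + 1
          = ((Finset.univ.filter fun j : Fin (m' + 1) =>
            (Sum.inr (Sum.inl j) : CT (m' + 1) n) ∈ S)ᶜ).card
        have h1 : ((Finset.univ.filter fun j : Fin (m' + 1) =>
            (Sum.inr (Sum.inl j) : CT (m' + 1) n) ∈ S)ᶜ).card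
            = (m' + 1) - (Finset.univ.filter fun j : Fin (m' + 1) =>
            (Sum.inr (Sum.inl j) : CT (m' + 1) n) ∈ S).card := by
          rw [Finset.card_compl, Fintype.card_fin]
        have h2 : (Finset.univ.filter fun j : Fin (m' + 1) =>
            (Sum.inr (Sum.inl j) : CT (m' + 1) n) ∈ S).card ≤ m' + 1 := by
          have h3 := Finset.card_le_univ (Finset.univ.filter fun j : Fin (m' + 1) =>
            (Sum.inr (Sum.inl j) : CT (m' + 1) n) ∈ S)
          simpa using h3
        omega
    · intro x hx
      rw [Finset.mem_filter] at hx
      obtain ⟨hxp, hgood⟩ := hx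
      have hα1 : α ∈ x.1 := hgood.1
      have hβ1 : β ∈ x.1 := hgood.2.1
      have hcardrel : x.2.card + 1 = x.1.card := hgood.2.2
      have hx1le : x.1.card ≤ m' + 1 := by simpa using Finset.card_le_univ x.1
      have h1le : 1 ≤ x.1.card := Finset.card_pos.2 ⟨α, hα1⟩
      rw [Finset.mem_filter]
      have hnotmem : (Sum.inl () : CT (m' + 1) n) ∉
          (x.1ᶜ.image fun j => (Sum.inr (Sum.inl j) : CT (m' + 1) n)) ∪
          (x.2.image fun c => (Sum.inr (Sum.inr c) : CT (m' + 1) n)) := by simp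
      refine ⟨Finset.mem_powersetCard_univ.2 ?_, by simp, by simp [hα1], by simp [hβ1]⟩
      rw [Finset.card_insert_of_notMem hnotmem,
        Finset.card_union_of_disjoint (by simp [Finset.disjoint_left]),
        Finset.card_image_of_injective _ (fun a b h => by simpa using h),
        Finset.card_image_of_injective _ (fun a b h => by simpa using h)]
      have hcc : x.1ᶜ.card = (m' + 1) - x.1.card := by simp [Finset.card_compl]
      omega
    · intro S hS
      rw [Finset.mem_filter] at hS
      obtain ⟨hg0, hgα, hgβ⟩ := hS.2
      ext x
      rcases x with u | j | c
      · cases u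
        simp [hg0]
      · simp
      · simp
    · intro x hx
      obtain ⟨x1, x2⟩ := x
      simp only [Prod.mk.injEq]
      constructor
      · ext j
        simp
      · ext c
        simp
    · intro S hS
      rw [Finset.mem_filter] at hS
      obtain ⟨hS1, hg0, hgα, hgβ⟩ := hS
      rw [pairMinor_good F α β S
        ((Finset.univ.filter fun j : Fin (m' + 1) =>
          (Sum.inr (Sum.inl j) : CT (m' + 1) n) ∈ S)ᶜ)
        (Finset.univ.filter fun c : Fin n => (Sum.inr (Sum.inr c) : CT (m' + 1) n) ∈ S)
        (fun j => by simp) (fun c => by simp)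
        (Finset.mem_powersetCard_univ.1 hS1) hg0 (by simp [hgα]) (by simp [hgβ])]
  rw [hbij]
  have huc : (Finset.univ : Finset (Fin (m' + 1))).card = m' + 1 := by simp
  have hRHS : ∑ k ∈ Finset.Icc 1 (min (m' + 1) (min (m' + 1) n + 1)),
      ∑ A ∈ Finset.powersetCard k (Finset.univ : Finset (Fin (m' + 1))),
        ∑ I' ∈ Finset.powersetCard (k - 1) (Finset.univ : Finset (Fin n)),
          (if α ∈ A ∧ β ∈ A then
            (-1 : ℝ) ^ (ordIdx A α + ordIdx A β + α.val + β.val) *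
              mminor F (A.erase α) I' * mminor F (A.erase β) I' else 0)
      = (-1 : ℝ) ^ v * ∑ x ∈ (Finset.univ.powerset ×ˢ Finset.univ.powerset).filter goodT,
          T' x.1 x.2 := by
    calc ∑ k ∈ Finset.Icc 1 (min (m' + 1) (min (m' + 1) n + 1)),
      ∑ A ∈ Finset.powersetCard k (Finset.univ : Finset (Fin (m' + 1))),
        ∑ I' ∈ Finset.powersetCard (k - 1) (Finset.univ : Finset (Fin n)),
          (if α ∈ A ∧ β ∈ A then
            (-1 : ℝ) ^ (ordIdx A α + ordIdx A β + α.val + β.val) *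
              mminor F (A.erase α) I' * mminor F (A.erase β) I' else 0)
        = ∑ k ∈ Finset.Icc 1 (min (m' + 1) (min (m' + 1) n + 1)),
          ∑ A ∈ Finset.powersetCard k (Finset.univ : Finset (Fin (m' + 1))),
            ∑ I' ∈ Finset.powersetCard (k - 1) (Finset.univ : Finset (Fin n)),
              (if goodT (A, I') then (-1 : ℝ) ^ v * T' A I' else 0) := by
          refine Finset.sum_congr rfl fun k hk => Finset.sum_congr rfl fun A hA =>
            Finset.sum_congr rfl fun I' hI' => ?_
          rw [Finset.mem_Icc] at hk
          have hAc := Finset.mem_powersetCard_univ.1 hA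
          have hIc := Finset.mem_powersetCard_univ.1 hI'
          by_cases hc : α ∈ A ∧ β ∈ A
          · rw [if_pos hc, if_pos (show goodT (A, I') from ⟨hc.1, hc.2,
              show I'.card + 1 = A.card by omega⟩), hT', hv]
            ring
          · rw [if_neg hc, if_neg (fun hg => hc ⟨hg.1, hg.2.1⟩)]
      _ = ∑ k ∈ Finset.Icc 1 (min (m' + 1) (min (m' + 1) n + 1)),
          ∑ A ∈ Finset.powersetCard k (Finset.univ : Finset (Fin (m' + 1))),
            ∑ I' ∈ (Finset.univ : Finset (Fin n)).powerset,
              (if goodT (A, I') then (-1 : ℝ) ^ v * T' A I' else 0) := by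
          refine Finset.sum_congr rfl fun k hk => Finset.sum_congr rfl fun A hA => ?_
          rw [Finset.mem_Icc] at hk
          have hAc := Finset.mem_powersetCard_univ.1 hA
          rw [Finset.powersetCard_eq_filter]
          refine Finset.sum_filter_of_ne fun I' hI' hne => ?_
          have hg : goodT (A, I') := by
            by_contra hgc
            exact hne (if_neg hgc)
          have h2 : I'.card + 1 = A.card := hg.2.2
          omega
      _ = ∑ k ∈ Finset.range (m' + 1 + 1),
          ∑ A ∈ Finset.powersetCard k (Finset.univ : Finset (Fin (m' + 1))),
            ∑ I' ∈ (Finset.univ : Finset (Fin n)).powerset,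
              (if goodT (A, I') then (-1 : ℝ) ^ v * T' A I' else 0) := by
          refine Finset.sum_subset ?_ ?_
          · intro k hk
            rw [Finset.mem_Icc] at hk
            rw [Finset.mem_range]
            omega
          · intro k hk hknot
            refine Finset.sum_eq_zero fun A hA => Finset.sum_eq_zero fun I' hI' => ?_
            rw [if_neg]
            intro hg
            have hAc := Finset.mem_powersetCard_univ.1 hA
            have hIle : I'.card ≤ n := by simpa using Finset.card_le_univ I'
            have hα1 : α ∈ A := hg.1
            have h1 : 1 ≤ A.card := Finset.card_pos.2 ⟨α, hα1⟩
            rw [Finset.mem_range] at hk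
            rw [Finset.mem_Icc] at hknot
            push_neg at hknot
            have h2 : I'.card + 1 = A.card := hg.2.2
            omega
      _ = ∑ A ∈ (Finset.univ : Finset (Fin (m' + 1))).powerset,
            ∑ I' ∈ (Finset.univ : Finset (Fin n)).powerset,
              (if goodT (A, I') then (-1 : ℝ) ^ v * T' A I' else 0) := by
          rw [Finset.sum_powerset, huc]
      _ = ∑ x ∈ (Finset.univ : Finset (Fin (m' + 1))).powerset ×ˢ
            (Finset.univ : Finset (Fin n)).powerset,
              (if goodT x then (-1 : ℝ) ^ v * T' x.1 x.2 else 0) := by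
          rw [Finset.sum_product]
      _ = ∑ x ∈ ((Finset.univ : Finset (Fin (m' + 1))).powerset ×ˢ
            (Finset.univ : Finset (Fin n)).powerset).filter goodT,
              (-1 : ℝ) ^ v * T' x.1 x.2 := by
          rw [Finset.sum_filter]
      _ = (-1 : ℝ) ^ v * ∑ x ∈ ((Finset.univ : Finset (Fin (m' + 1))).powerset ×ˢ
            (Finset.univ : Finset (Fin n)).powerset).filter goodT, T' x.1 x.2 := by
          rw [Finset.mul_sum]
  exact hRHS.symm
end
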